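/- arXiv:math/9906093 — 6 statements merged into one kernel-verified Lean document; each statement's English description precedes it below -/
import Mathlib

section
/- Let n ≥ 1 and let f(z) = ∑_{k=1}^{n} a_k z^{−k} with a_1, …, a_n ∈ ℂ (a rational function whose only pole is at 0 and which tends to 0 at infinity). Then for every γ ∈ (0, 2π), the symmetric limit lim_{M→∞} ∑_{1≤|m|≤M} e^{imγ} f(m) exists and equals −2πi · Res_{z=0} [ f(z) e^{iγz} / (e^{2πiz} − 1) ]. -/
open Complex Filter Finset

/-- `R` is the residue of `g` at `c`: for all sufficiently small `r > 0`, the circle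
integral of `g` over `|z - c| = r` equals `2πi·R`. -/
def IsResidueAt (g : ℂ → ℂ) (c R : ℂ) : Prop :=
  ∃ ε > (0 : ℝ), ∀ r : ℝ, 0 < r → r < ε →
    (∮ z in C(c, r), g z) = 2 * Real.pi * Complex.I * R

open Complex Filter Finset Metric Set
noncomputable section AuxRes
open scoped Classical


def Dfun : ℂ → ℂ := fun z => Complex.exp (2 * Real.pi * Complex.I * z) - 1

def Efun : ℂ → ℂ := dslope Dfun 0

lemma hDdiff : Differentiable ℂ Dfun := by
  have : Differentiable ℂ fun z : ℂ => Complex.exp (2 * Real.pi * Complex.I * z) :=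
    (differentiable_id.const_mul _).cexp
  exact this.sub_const 1

lemma Dfun_zero : Dfun 0 = 0 := by simp [Dfun]

lemma Dfun_eq_zero_iff (z : ℂ) : Dfun z = 0 ↔ ∃ m : ℤ, z = (m : ℂ) := by
  rw [Dfun, sub_eq_zero, Complex.exp_eq_one_iff]
  constructor
  · rintro ⟨n, hn⟩
    refine ⟨n, mul_left_cancel₀ Complex.two_pi_I_ne_zero ?_⟩
    linear_combination hn
  · rintro ⟨m, rfl⟩
    exact ⟨m, by ring⟩

lemma Dfun_int (m : ℤ) : Dfun (m : ℂ) = 0 := (Dfun_eq_zero_iff _).mpr ⟨m, rfl⟩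

lemma Dfun_periodic (m : ℤ) (z : ℂ) : Dfun (z - m) = Dfun z := by
  unfold Dfun
  congr 1
  rw [mul_sub, Complex.exp_sub,
    show (2 * (Real.pi : ℂ) * Complex.I * m) = (m : ℂ) * (2 * Real.pi * Complex.I) from by ring,
    Complex.exp_int_mul_two_pi_mul_I, div_one]

lemma Efun_diff : Differentiable ℂ Efun := by
  intro z
  have hball : ball (0 : ℂ) (‖z‖ + 1) ∈ nhds (0 : ℂ) :=
    ball_mem_nhds _ (by positivity)
  have h := (Complex.differentiableOn_dslope hball).mpr hDdiff.differentiableOn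
  exact h.differentiableAt (isOpen_ball.mem_nhds (by
    rw [mem_ball_zero_iff]; linarith [norm_nonneg z]))

lemma Efun_zero : Efun 0 = 2 * Real.pi * Complex.I := by
  have h : HasDerivAt Dfun (2 * Real.pi * Complex.I) 0 := by
    have h1 : HasDerivAt (fun z : ℂ => 2 * Real.pi * Complex.I * z)
        (2 * Real.pi * Complex.I) 0 := by
      simpa using (hasDerivAt_id (0:ℂ)).const_mul (2 * (Real.pi:ℂ) * Complex.I)
    have h2 := h1.cexp
    unfold Dfun
    simpa using h2.sub_const 1
  rw [Efun, dslope_same]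
  exact h.deriv

lemma Efun_eq {w : ℂ} (hw : w ≠ 0) : Efun w = Dfun w / w := by
  rw [Efun, dslope_of_ne _ hw, slope_def_field, Dfun_zero, sub_zero, sub_zero]

lemma Dfun_fact (m : ℤ) {z : ℂ} (hz : z ≠ (m : ℂ)) : Dfun z = (z - m) * Efun (z - m) := by
  have hw : z - (m : ℂ) ≠ 0 := sub_ne_zero.mpr hz
  rw [Efun_eq hw, mul_div_cancel₀ _ hw, Dfun_periodic]

lemma int_norm_one_le {m : ℤ} (hm : m ≠ 0) : (1 : ℝ) ≤ ‖(m : ℂ)‖ := by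
  rw [Complex.norm_intCast]
  exact_mod_cast Int.one_le_abs hm

lemma Efun_ne {w : ℂ} (hw : ‖w‖ < 1) : Efun w ≠ 0 := by
  rcases eq_or_ne w 0 with rfl | hw0
  · rw [Efun_zero]; exact Complex.two_pi_I_ne_zero
  · rw [Efun_eq hw0]
    apply div_ne_zero _ hw0
    intro h
    rcases (Dfun_eq_zero_iff w).mp h with ⟨m, rfl⟩
    rcases eq_or_ne m 0 with rfl | hm
    · simp at hw0
    · exact absurd hw (not_lt.mpr (int_norm_one_le hm))

lemma norm_cexp (w : ℂ) : ‖Complex.exp w‖ = Real.exp w.re := by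
  rw [Complex.norm_exp]

lemma re2 (z : ℂ) : (2 * (Real.pi : ℂ) * Complex.I * z).re = -(2 * Real.pi * z.im) := by
  simp [Complex.mul_re, Complex.mul_im]

lemma im2 (z : ℂ) : (2 * (Real.pi : ℂ) * Complex.I * z).im = 2 * Real.pi * z.re := by
  simp [Complex.mul_re, Complex.mul_im]

lemma reg (γ : ℝ) (z : ℂ) : (Complex.I * γ * z).re = -(γ * z.im) := by
  simp [Complex.mul_re, Complex.mul_im]

lemma absD_ge (M : ℕ) (hM : 1 ≤ M) {z : ℂ} (hz : ‖z‖ = (M : ℝ) + 1/2)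
    (hy : |z.im| ≤ 1/2) : 1 ≤ ‖Dfun z‖ := by
  set x := z.re with hx
  set y := z.im with hyd
  have hsq : x ^ 2 + y ^ 2 = ((M : ℝ) + 1/2) ^ 2 := by
    have h := Complex.sq_norm z
    rw [hz, Complex.normSq_apply] at h
    linear_combination -h
  have hM1 : (1 : ℝ) ≤ M := by exact_mod_cast hM
  have hy' := abs_le.mp hy
  have hx3 : (M : ℝ) + 3/8 ≤ |x| := by
    nlinarith [abs_nonneg x, _root_.sq_abs x, sq_nonneg y]
  have hx2 : |x| ≤ (M : ℝ) + 1/2 := by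
    nlinarith [abs_nonneg x, _root_.sq_abs x, sq_nonneg y]
  have hcos : Real.cos (2 * Real.pi * x) ≤ 0 := by
    have h1 : Real.cos (2 * Real.pi * x) = Real.cos (2 * Real.pi * |x|) := by
      rcases abs_cases x with ⟨h, _⟩ | ⟨h, _⟩
      · rw [h]
      · rw [h, show 2 * Real.pi * -x = -(2 * Real.pi * x) by ring, Real.cos_neg]
    have h2 : Real.cos (2 * Real.pi * |x|) = Real.cos (2 * Real.pi * (|x| - M)) := by
      rw [show 2 * Real.pi * |x| = 2 * Real.pi * (|x| - M) + (M : ℤ) * (2 * Real.pi) by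
        push_cast; ring]
      exact Real.cos_add_int_mul_two_pi _ M
    rw [h1, h2]
    apply Real.cos_nonpos_of_pi_div_two_le_of_le <;> nlinarith [Real.pi_pos]
  have hre : (Dfun z).re = Real.exp (-(2 * Real.pi * y)) * Real.cos (2 * Real.pi * x) - 1 := by
    simp only [Dfun, Complex.sub_re, Complex.one_re, Complex.exp_re, re2, im2]
    rfl
  have hexp_nonpos : Real.exp (-(2 * Real.pi * y)) * Real.cos (2 * Real.pi * x) ≤ 0 :=
    mul_nonpos_iff.mpr (Or.inl ⟨(Real.exp_pos _).le, hcos⟩)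
  calc (1 : ℝ) ≤ |(Dfun z).re| := by
        rw [hre, abs_of_nonpos (by linarith)]; linarith
    _ ≤ ‖Dfun z‖ := by exact Complex.abs_re_le_norm _

lemma ratio_bound (γ : ℝ) (hγ₀ : 0 < γ) (hγ₁ : γ < 2 * Real.pi) (M : ℕ) (hM : 1 ≤ M)
    {z : ℂ} (hz : ‖z‖ = (M : ℝ) + 1/2) :
    ‖Complex.exp (Complex.I * γ * z)‖ ≤
      (Real.exp (2 * Real.pi) / (1 - Real.exp (-Real.pi))) *
        Real.exp (-(min γ (2 * Real.pi - γ)) * |z.im|) * ‖Dfun z‖ := by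
  set δ := min γ (2 * Real.pi - γ) with hδ
  have hπ := Real.pi_pos
  have hδ0 : 0 < δ := lt_min hγ₀ (by linarith)
  have hδγ : δ ≤ γ := min_le_left _ _
  have hδγ' : δ ≤ 2 * Real.pi - γ := min_le_right _ _
  have hδπ : δ ≤ Real.pi := by
    rcases le_total γ Real.pi with h | h
    · exact hδγ.trans h
    · exact hδγ'.trans (by linarith)
  have hc₁ : 0 < 1 - Real.exp (-Real.pi) := by
    have : Real.exp (-Real.pi) < 1 := by
      rw [← Real.exp_zero]; exact Real.exp_lt_exp.mpr (by linarith)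
    linarith
  have hc₁' : 1 - Real.exp (-Real.pi) ≤ 1 := by
    have := Real.exp_pos (-Real.pi); linarith
  have hK : Real.exp (2 * Real.pi) ≤ Real.exp (2 * Real.pi) / (1 - Real.exp (-Real.pi)) := by
    rw [le_div_iff₀ hc₁]
    nlinarith [Real.exp_pos (2 * Real.pi)]
  have hKc : Real.exp (2 * Real.pi) / (1 - Real.exp (-Real.pi)) * (1 - Real.exp (-Real.pi)) =
      Real.exp (2 * Real.pi) := div_mul_cancel₀ _ (ne_of_gt hc₁)
  have hK0 : 0 < Real.exp (2 * Real.pi) / (1 - Real.exp (-Real.pi)) := by positivity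
  set K := Real.exp (2 * Real.pi) / (1 - Real.exp (-Real.pi)) with hKdef
  set y := z.im with hydef
  rw [norm_cexp, reg]
  rcases le_or_gt (|y|) (1/2) with hy | hy
  · -- middle strip
    have hD := absD_ge M hM hz hy
    have hy' := abs_le.mp hy
    calc Real.exp (-(γ * y)) ≤ Real.exp (2 * Real.pi) * Real.exp (-δ * |y|) := by
          rw [← Real.exp_add]
          apply Real.exp_le_exp.mpr
          linarith [mul_nonneg hγ₀.le (by linarith : (0:ℝ) ≤ 1/2 + y),
            mul_nonneg (by linarith : (0:ℝ) ≤ Real.pi - δ) (abs_nonneg y),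
            mul_le_mul_of_nonneg_left hy Real.pi_pos.le]
      _ ≤ K * Real.exp (-δ * |y|) := by
          exact mul_le_mul_of_nonneg_right hK (Real.exp_nonneg _)
      _ = K * Real.exp (-δ * |y|) * 1 := (mul_one _).symm
      _ ≤ K * Real.exp (-δ * |y|) * ‖Dfun z‖ := by
          exact mul_le_mul_of_nonneg_left hD (by positivity)
  · have hED : ‖Complex.exp (2 * Real.pi * Complex.I * z)‖ = Real.exp (-(2 * Real.pi * y)) := by
      rw [norm_cexp, re2]
    rcases abs_cases y with ⟨hyy, hy0⟩ | ⟨hyy, hy0⟩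
    · -- y ≥ 1/2
      have hy2 : (1:ℝ)/2 < y := by rw [hyy] at hy; exact hy
      have hD : 1 - Real.exp (-Real.pi) ≤ ‖Dfun z‖ := by
        have h1 : ‖(1:ℂ)‖ - ‖Complex.exp (2 * Real.pi * Complex.I * z)‖ ≤ ‖Dfun z‖ := by
          have := norm_sub_norm_le (1:ℂ) (Complex.exp (2 * Real.pi * Complex.I * z))
          rw [show ((1:ℂ) - Complex.exp (2 * Real.pi * Complex.I * z)) =
            -(Dfun z) by simp [Dfun], norm_neg] at this
          exact this
        rw [hED, norm_one] at h1
        have h2 : Real.exp (-(2 * Real.pi * y)) ≤ Real.exp (-Real.pi) :=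
          Real.exp_le_exp.mpr (by nlinarith)
        linarith
      calc Real.exp (-(γ * y)) ≤ Real.exp (2 * Real.pi) * Real.exp (-δ * |y|) := by
            rw [← Real.exp_add]
            apply Real.exp_le_exp.mpr
            rw [hyy]
            linarith [mul_nonneg (by linarith : (0:ℝ) ≤ γ - δ) hy0]
        _ = K * (1 - Real.exp (-Real.pi)) * Real.exp (-δ * |y|) := by rw [hKc]
        _ = K * Real.exp (-δ * |y|) * (1 - Real.exp (-Real.pi)) := by ring
        _ ≤ K * Real.exp (-δ * |y|) * ‖Dfun z‖ := by
            exact mul_le_mul_of_nonneg_left hD (by positivity)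
    · -- y ≤ -1/2
      have hy2 : (1:ℝ)/2 < -y := by rw [hyy] at hy; exact hy
      have hD : Real.exp (-(2 * Real.pi * y)) * (1 - Real.exp (-Real.pi)) ≤ ‖Dfun z‖ := by
        have h1 : ‖Complex.exp (2 * Real.pi * Complex.I * z)‖ - ‖(1:ℂ)‖ ≤ ‖Dfun z‖ :=
          norm_sub_norm_le _ _
        rw [hED, norm_one] at h1
        have h2 : (1:ℝ) ≤ Real.exp (-(2 * Real.pi * y)) * Real.exp (-Real.pi) := by
          rw [← Real.exp_add]
          apply Real.one_le_exp
          nlinarith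
        nlinarith [Real.exp_pos (-(2 * Real.pi * y))]
      calc Real.exp (-(γ * y))
          ≤ Real.exp (2 * Real.pi) * Real.exp (-δ * |y|) * Real.exp (-(2 * Real.pi * y)) := by
            rw [← Real.exp_add, ← Real.exp_add]
            apply Real.exp_le_exp.mpr
            rw [hyy]
            linarith [mul_nonneg (by linarith : (0:ℝ) ≤ 2 * Real.pi - γ - δ)
              (by linarith : (0:ℝ) ≤ -y)]
        _ = K * Real.exp (-δ * |y|) * (Real.exp (-(2 * Real.pi * y)) * (1 - Real.exp (-Real.pi))) := by
            rw [← hKc]; ring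
        _ ≤ K * Real.exp (-δ * |y|) * ‖Dfun z‖ := by
            exact mul_le_mul_of_nonneg_left hD (by positivity)

lemma norm_intC (k : ℤ) : ‖(k : ℂ)‖ = |(k : ℝ)| := by
  rw [Complex.norm_intCast]

lemma half_int_abs_ne (M : ℕ) (k : ℤ) : |(k : ℝ)| ≠ (M : ℝ) + 1/2 := by
  intro h
  rcases le_or_gt |k| (M : ℤ) with hk | hk
  · have h1 : |(k : ℝ)| ≤ (M : ℝ) := by
      rw [← Int.cast_abs]; exact_mod_cast hk
    linarith
  · have h1 : ((M : ℝ) + 1) ≤ |(k : ℝ)| := by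
      rw [← Int.cast_abs]; exact_mod_cast hk
    linarith

lemma quarter_int_abs_ne (k : ℤ) : |(k : ℝ)| ≠ 1/4 := by
  intro h
  rcases eq_or_ne k 0 with rfl | hk
  · norm_num at h
  · have h1 : (1 : ℝ) ≤ |(k : ℝ)| := by
      rw [← Int.cast_abs]; exact_mod_cast Int.one_le_abs hk
    linarith

lemma sphere_fact {ρ : ℝ} (hρ : 0 < ρ) (hint : ∀ k : ℤ, |(k : ℝ)| ≠ ρ) {z : ℂ}
    (hz : ‖z‖ = ρ) : z ≠ 0 ∧ Dfun z ≠ 0 := by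
  constructor
  · rintro rfl; rw [norm_zero] at hz; exact absurd hz.symm (ne_of_gt hρ)
  · intro h
    rcases (Dfun_eq_zero_iff z).mp h with ⟨k, rfl⟩
    exact hint k (by rw [← hz, norm_intC])

lemma hpoint (q : ℂ → ℂ) (m : ℤ) {z : ℂ} (hz : z ≠ (m : ℂ)) :
    q z / Dfun z - q m * (2 * Real.pi * Complex.I)⁻¹ * (z - m)⁻¹ =
      dslope (fun w => q w * (Efun (w - (m : ℂ)))⁻¹) (m : ℂ) z := by
  have hw : z - (m : ℂ) ≠ 0 := sub_ne_zero.mpr hz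
  rw [dslope_of_ne _ hz, slope_def_field, sub_self, Efun_zero]
  rw [Dfun_fact m hz]
  simp only [div_eq_mul_inv, mul_inv]
  ring

lemma circleIntegral_finset_sum {ι : Type*} (s : Finset ι) (F : ι → ℂ → ℂ) (c : ℂ) (ρ : ℝ)
    (h : ∀ i ∈ s, CircleIntegrable (F i) c ρ) :
    (∮ z in C(c, ρ), ∑ i ∈ s, F i z) = ∑ i ∈ s, ∮ z in C(c, ρ), F i z := by
  simp only [circleIntegral, smul_sum]
  exact intervalIntegral.integral_finset_sum fun i hi => (circleIntegrable_iff ρ).mp (h i hi)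

lemma key_identity (q : ℂ → ℂ) (hqd : ∀ z : ℂ, z ≠ 0 → DifferentiableAt ℂ q z)
    (R : ℂ) (hinner : (∮ z in C(0, 1/4), q z / Dfun z) = 2 * Real.pi * Complex.I * R)
    (M : ℕ) (hM : 1 ≤ M) :
    ∑ m ∈ (Finset.Icc (-(M : ℤ)) (M : ℤ)).filter (· ≠ 0), q (m : ℂ) =
      (∮ z in C(0, (M : ℝ) + 1/2), q z / Dfun z) - 2 * Real.pi * Complex.I * R := by
  have hM1 : (1 : ℝ) ≤ (M : ℝ) := by exact_mod_cast hM
  set g : ℂ → ℂ := fun z => q z / Dfun z with hgdef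
  set S : Finset ℤ := (Finset.Icc (-(M : ℤ)) (M : ℤ)).filter (· ≠ 0) with hSdef
  set r : ℂ → ℂ := fun c => q c * (2 * Real.pi * Complex.I)⁻¹ with hrdef
  set P : ℂ → ℂ := fun z => ∑ m ∈ S, r m * (z - m)⁻¹ with hPdef
  -- basic facts about members of S
  have hSne : ∀ m ∈ S, m ≠ 0 := fun m hm => (Finset.mem_filter.mp hm).2
  have hSle : ∀ m ∈ S, ‖(m : ℂ)‖ ≤ (M : ℝ) := by
    intro m hm
    have h := Finset.mem_Icc.mp (Finset.mem_filter.mp hm).1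
    rw [norm_intC, ← Int.cast_abs]
    exact_mod_cast abs_le.mpr h
  have hS1 : ∀ m ∈ S, (1 : ℝ) ≤ ‖(m : ℂ)‖ := fun m hm => int_norm_one_le (hSne m hm)
  -- differentiability of g off the integers
  have hgd : ∀ z : ℂ, z ≠ 0 → Dfun z ≠ 0 → DifferentiableAt ℂ g z := by
    intro z hz hD
    exact (hqd z hz).div (hDdiff z) hD
  -- differentiability of P away from points of S
  have hPd : ∀ z : ℂ, (∀ m ∈ S, z ≠ (m : ℂ)) → DifferentiableAt ℂ P z := by
    intro z hz
    apply DifferentiableAt.fun_sum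
    intro m hm
    exact (differentiableAt_const _).mul
      ((differentiableAt_id.sub_const _).inv (sub_ne_zero.mpr (hz m hm)))
  have hDne_imp : ∀ z : ℂ, Dfun z ≠ 0 → ∀ m : ℤ, z ≠ (m : ℂ) := by
    intro z hD m h
    exact hD (h ▸ Dfun_int m)
  -- the patched function
  set HH : ℂ → ℂ := fun z =>
    (if Dfun z = 0 ∧ z ≠ 0 then deriv (fun w => q w * (Efun (w - z))⁻¹) z else g z) - P z
    with hHdef
  have hHeq : ∀ z : ℂ, Dfun z ≠ 0 → HH z = g z - P z := by
    intro z h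
    simp only [hHdef]
    rw [if_neg (by tauto)]
  have hopen : IsOpen {w : ℂ | Dfun w ≠ 0} :=
    isOpen_compl_singleton.preimage hDdiff.continuous
  -- differentiability of HH off the zeros of D
  have hHd1 : ∀ z : ℂ, z ≠ 0 → Dfun z ≠ 0 → DifferentiableAt ℂ HH z := by
    intro z hz hD
    have hev : HH =ᶠ[nhds z] fun w => g w - P w := by
      filter_upwards [hopen.mem_nhds hD] with w hw using hHeq w hw
    rw [Filter.EventuallyEq.differentiableAt_iff hev]
    exact (hgd z hz hD).sub (hPd z fun m _ => hDne_imp z hD m)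
  -- differentiability of HH at points of S
  have hHdm : ∀ m ∈ S, DifferentiableAt ℂ HH ((m : ℤ) : ℂ) := by
    intro m hm
    have hc0 : ((m : ℤ) : ℂ) ≠ 0 := by
      exact Int.cast_ne_zero.mpr (hSne m hm)
    set G : ℂ → ℂ := fun z => dslope (fun w => q w * (Efun (w - (m : ℂ)))⁻¹) (m : ℂ) z -
      ∑ m' ∈ S.erase m, r m' * (z - m')⁻¹ with hGdef
    have hGd : DifferentiableAt ℂ G (m : ℂ) := by
      apply DifferentiableAt.sub
      · have hball : ball ((m : ℤ) : ℂ) (1/2) ∈ nhds ((m : ℤ) : ℂ) :=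
          ball_mem_nhds _ (by norm_num)
        have hFd : DifferentiableOn ℂ (fun w => q w * (Efun (w - (m : ℂ)))⁻¹)
            (ball ((m : ℤ) : ℂ) (1/2)) := by
          intro w hw
          rw [mem_ball, dist_eq_norm] at hw
          have hw0 : w ≠ 0 := by
            intro h0
            rw [h0, zero_sub, norm_neg] at hw
            exact absurd (int_norm_one_le (hSne m hm)) (not_le.mpr (by linarith))
          have hE : Efun (w - m) ≠ 0 := Efun_ne (by linarith)
          have hE1 : DifferentiableAt ℂ (fun w : ℂ => Efun (w - (m : ℂ))) w :=
            DifferentiableAt.comp w (Efun_diff _) (differentiableAt_id.sub_const _)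
          exact ((hqd w hw0).mul (hE1.inv hE)).differentiableWithinAt
        exact ((Complex.differentiableOn_dslope hball).mpr hFd).differentiableAt hball
      · apply DifferentiableAt.fun_sum
        intro m' hm'
        have hne : ((m : ℤ) : ℂ) ≠ ((m' : ℤ) : ℂ) := by
          exact_mod_cast (Finset.ne_of_mem_erase hm').symm
        exact (differentiableAt_const _).mul
          ((differentiableAt_id.sub_const _).inv (sub_ne_zero.mpr hne))
    have hev : HH =ᶠ[nhds ((m : ℤ) : ℂ)] G := by
      have hball : ball ((m : ℤ) : ℂ) (1/2) ∈ nhds ((m : ℤ) : ℂ) :=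
        ball_mem_nhds _ (by norm_num)
      filter_upwards [hball] with w hw
      rw [mem_ball, dist_eq_norm] at hw
      have hsplit : ∀ z : ℂ, P z = r m * (z - m)⁻¹ + ∑ m' ∈ S.erase m, r m' * (z - m')⁻¹ := by
        intro z
        rw [hPdef]
        exact (Finset.add_sum_erase S _ hm).symm
      rcases eq_or_ne w ((m : ℤ) : ℂ) with rfl | hwc
      · simp only [hHdef, hGdef]
        rw [if_pos ⟨Dfun_int m, hc0⟩, dslope_same, hsplit, sub_self, inv_zero, mul_zero, zero_add]
      · have hDw : Dfun w ≠ 0 := by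
          intro h0
          rcases (Dfun_eq_zero_iff w).mp h0 with ⟨k, rfl⟩
          have : ‖((k : ℤ) : ℂ) - ((m : ℤ) : ℂ)‖ < 1/2 := hw
          rw [← Int.cast_sub, norm_intC, ← Int.cast_abs] at this
          have hk : k = m := by
            by_contra hkm
            have : (1 : ℝ) ≤ ((|k - m| : ℤ) : ℝ) := by
              exact_mod_cast Int.one_le_abs (sub_ne_zero.mpr hkm)
            linarith
          exact hwc (by rw [hk])
        rw [hHeq w hDw]
        show g w - P w = G w
        rw [hsplit w]
        simp only [hGdef]
        rw [← hpoint q m hwc]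
        simp only [hgdef, hrdef]
        ring
    rw [Filter.EventuallyEq.differentiableAt_iff hev]
    exact hGd
  -- classification of zeros of D in the big closed annulus
  have hclass : ∀ z : ℂ, ‖z‖ ≤ (M : ℝ) + 1/2 → (1:ℝ)/4 ≤ ‖z‖ → Dfun z = 0 →
      ∃ m ∈ S, z = ((m : ℤ) : ℂ) := by
    intro z h1 h2 h0
    rcases (Dfun_eq_zero_iff z).mp h0 with ⟨k, rfl⟩
    rw [norm_intC, ← Int.cast_abs] at h1 h2
    refine ⟨k, ?_, rfl⟩
    have hk0 : k ≠ 0 := by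
      intro h
      rw [h] at h2
      norm_num at h2
    have hkM : |k| ≤ (M : ℤ) := by
      by_contra h
      push_neg at h
      have h' : ((M : ℝ) + 1) ≤ ((|k| : ℤ) : ℝ) := by exact_mod_cast h
      linarith
    rw [hSdef, Finset.mem_filter, Finset.mem_Icc]
    exact ⟨abs_le.mp hkM, hk0⟩
  -- continuity of HH on the closed annulus
  have hHcont : ContinuousOn HH (closedBall (0:ℂ) ((M:ℝ)+1/2) \ ball (0:ℂ) (1/4)) := by
    intro z hz
    simp only [mem_diff, mem_closedBall, mem_ball, dist_zero_right, not_lt] at hz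
    by_cases hD : Dfun z = 0
    · obtain ⟨m, hm, rfl⟩ := hclass z hz.1 hz.2 hD
      exact (hHdm m hm).continuousAt.continuousWithinAt
    · have hz0 : z ≠ 0 := by
        rintro rfl
        rw [norm_zero] at hz
        norm_num at hz
      exact (hHd1 z hz0 hD).continuousAt.continuousWithinAt
  have hHdiff : ∀ z ∈ (ball (0:ℂ) ((M:ℝ)+1/2) \ closedBall (0:ℂ) (1/4)) \ (∅ : Set ℂ),
      DifferentiableAt ℂ HH z := by
    intro z hz
    simp only [diff_empty, mem_diff, mem_ball, mem_closedBall, dist_zero_right, not_le] at hz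
    by_cases hD : Dfun z = 0
    · obtain ⟨m, hm, rfl⟩ := hclass z hz.1.le (by linarith [hz.2]) hD
      exact hHdm m hm
    · have hz0 : z ≠ 0 := by
        rintro rfl
        rw [norm_zero] at hz
        norm_num at hz
      exact hHd1 z hz0 hD
  have hann := Complex.circleIntegral_eq_of_differentiable_on_annulus_off_countable
    (by norm_num : (0:ℝ) < 1/4) (by linarith : (1:ℝ)/4 ≤ (M:ℝ)+1/2) countable_empty hHcont hHdiff
  -- sphere facts
  have hsB : ∀ z ∈ sphere (0:ℂ) ((M:ℝ)+1/2), z ≠ 0 ∧ Dfun z ≠ 0 := by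
    intro z hz
    rw [mem_sphere, dist_zero_right] at hz
    exact sphere_fact (by linarith) (half_int_abs_ne M) hz
  have hsS : ∀ z ∈ sphere (0:ℂ) ((1:ℝ)/4), z ≠ 0 ∧ Dfun z ≠ 0 := by
    intro z hz
    rw [mem_sphere, dist_zero_right] at hz
    exact sphere_fact (by norm_num) quarter_int_abs_ne hz
  -- integrability
  have hgint : ∀ ρ : ℝ, 0 ≤ ρ → (∀ z ∈ sphere (0:ℂ) ρ, z ≠ 0 ∧ Dfun z ≠ 0) →
      CircleIntegrable g 0 ρ := by
    intro ρ hρ h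
    refine ContinuousOn.circleIntegrable hρ ?_
    intro z hz
    exact ((hgd z (h z hz).1 (h z hz).2).continuousAt).continuousWithinAt
  have hPcont : ∀ ρ : ℝ, (∀ z ∈ sphere (0:ℂ) ρ, Dfun z ≠ 0) → ContinuousOn P (sphere (0:ℂ) ρ) := by
    intro ρ h z hz
    exact ((hPd z fun m _ => hDne_imp z (h z hz) m).continuousAt).continuousWithinAt
  have hcongr : ∀ ρ : ℝ, 0 ≤ ρ → (∀ z ∈ sphere (0:ℂ) ρ, z ≠ 0 ∧ Dfun z ≠ 0) →
      (∮ z in C(0, ρ), HH z) = (∮ z in C(0, ρ), g z) - ∮ z in C(0, ρ), P z := by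
    intro ρ hρ h
    rw [circleIntegral.integral_congr hρ fun z hz => hHeq z (h z hz).2]
    exact circleIntegral.integral_sub (hgint ρ hρ h)
      (ContinuousOn.circleIntegrable hρ (hPcont ρ fun z hz => (h z hz).2))
  -- value of the integral of P over the big circle
  have hPbig : (∮ z in C(0, (M:ℝ)+1/2), P z) = ∑ m ∈ S, r m * (2*Real.pi*Complex.I) := by
    rw [hPdef,
      circleIntegral_finset_sum S (fun m z => r (m:ℂ) * (z - (m:ℂ))⁻¹) 0 ((M:ℝ)+1/2) ?_]
    · apply Finset.sum_congr rfl
      intro m hm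
      have hmem : ((m:ℤ):ℂ) ∈ ball (0:ℂ) ((M:ℝ)+1/2) := by
        rw [mem_ball, dist_zero_right]
        linarith [hSle m hm]
      have hsm := circleIntegral.integral_smul (r (m:ℂ)) (fun z => (z - (m:ℂ))⁻¹) 0 ((M:ℝ)+1/2)
      simp only [smul_eq_mul] at hsm
      rw [hsm, circleIntegral.integral_sub_inv_of_mem_ball hmem]
    · intro m hm
      refine ContinuousOn.circleIntegrable (by linarith) ?_
      intro z hz
      rw [mem_sphere, dist_zero_right] at hz
      have hne : z ≠ ((m:ℤ):ℂ) := by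
        intro h
        rw [h, norm_intC] at hz
        exact half_int_abs_ne M m hz
      have hd : DifferentiableAt ℂ (fun z : ℂ => r ((m:ℤ):ℂ) * (z - ((m:ℤ):ℂ))⁻¹) z :=
        (differentiableAt_const _).mul
          ((differentiableAt_id.sub_const _).inv (sub_ne_zero.mpr hne))
      exact hd.continuousAt.continuousWithinAt
  -- value of the integral of P over the small circle
  have hPsmall : (∮ z in C(0, (1:ℝ)/4), P z) = 0 := by
    rw [hPdef,
      circleIntegral_finset_sum S (fun m z => r (m:ℂ) * (z - (m:ℂ))⁻¹) 0 ((1:ℝ)/4) ?_]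
    · apply Finset.sum_eq_zero
      intro m hm
      have hne : ∀ z : ℂ, ‖z‖ ≤ 1/4 → z ≠ ((m:ℤ):ℂ) := by
        intro z hz h
        rw [h] at hz
        linarith [hS1 m hm]
      apply Complex.circleIntegral_eq_zero_of_differentiable_on_off_countable
        (by norm_num : (0:ℝ) ≤ 1/4) countable_empty
      · intro z hz
        rw [mem_closedBall, dist_zero_right] at hz
        have hd : DifferentiableAt ℂ (fun z : ℂ => r ((m:ℤ):ℂ) * (z - ((m:ℤ):ℂ))⁻¹) z :=
          (differentiableAt_const _).mul
            ((differentiableAt_id.sub_const _).inv (sub_ne_zero.mpr (hne z hz)))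
        exact hd.continuousAt.continuousWithinAt
      · intro z hz
        simp only [diff_empty, mem_ball, dist_zero_right] at hz
        exact (differentiableAt_const _).mul
          ((differentiableAt_id.sub_const _).inv (sub_ne_zero.mpr (hne z hz.le)))
    · intro m hm
      refine ContinuousOn.circleIntegrable (by norm_num) ?_
      intro z hz
      rw [mem_sphere, dist_zero_right] at hz
      have hne : z ≠ ((m:ℤ):ℂ) := by
        intro h
        rw [h] at hz
        linarith [hS1 m hm]
      have hd : DifferentiableAt ℂ (fun z : ℂ => r ((m:ℤ):ℂ) * (z - ((m:ℤ):ℂ))⁻¹) z :=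
        (differentiableAt_const _).mul
          ((differentiableAt_id.sub_const _).inv (sub_ne_zero.mpr hne))
      exact hd.continuousAt.continuousWithinAt
  -- combine everything
  have hcomb : (∮ z in C(0, (M:ℝ)+1/2), g z) - ∑ m ∈ S, r m * (2*Real.pi*Complex.I) =
      2*Real.pi*Complex.I*R := by
    have h1 := hcongr ((M:ℝ)+1/2) (by linarith) hsB
    have h2 := hcongr ((1:ℝ)/4) (by norm_num) hsS
    rw [hPbig] at h1
    rw [hPsmall, sub_zero, hinner] at h2
    rw [← h1, hann, h2]
  have hterm : ∀ m ∈ S, q ((m:ℤ):ℂ) = r (m:ℂ) * (2*Real.pi*Complex.I) := by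
    intro m hm
    simp only [hrdef]
    rw [mul_assoc, inv_mul_cancel₀ Complex.two_pi_I_ne_zero, mul_one]
  rw [Finset.sum_congr rfl hterm]
  linear_combination -hcomb

lemma circleMap_im (R θ : ℝ) : (circleMap 0 R θ).im = R * Real.sin θ := by
  simp [circleMap, Complex.exp_im]

-- the inner integral equals the residue integral
lemma inner_integral (q : ℂ → ℂ) (hqd : ∀ z : ℂ, z ≠ 0 → DifferentiableAt ℂ q z)
    (ε : ℝ) (hε : 0 < ε) {res : ℂ}
    (h : ∀ r : ℝ, 0 < r → r < ε → (∮ z in C(0, r), q z / Dfun z) = res) :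
    (∮ z in C(0, (1:ℝ)/4), q z / Dfun z) = res := by
  set ρ : ℝ := min (ε/2) (1/8) with hρdef
  have hρ0 : 0 < ρ := lt_min (by linarith) (by norm_num)
  have hρε : ρ < ε := lt_of_le_of_lt (min_le_left _ _) (by linarith)
  have hρ4 : ρ ≤ 1/4 := le_trans (min_le_right _ _) (by norm_num)
  have hfact : ∀ z : ℂ, ρ ≤ ‖z‖ → ‖z‖ ≤ 1/4 → z ≠ 0 ∧ Dfun z ≠ 0 := by
    intro z h1 h2
    have hz0 : z ≠ 0 := by
      rintro rfl
      rw [norm_zero] at h1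
      linarith
    refine ⟨hz0, fun h0 => ?_⟩
    rcases (Dfun_eq_zero_iff z).mp h0 with ⟨k, rfl⟩
    rcases eq_or_ne k 0 with rfl | hk
    · exact hz0 (by norm_num)
    · rw [Complex.norm_intCast] at h2
      have : (1:ℝ) ≤ |(k:ℝ)| := by
        rw [← Int.cast_abs]
        exact_mod_cast Int.one_le_abs hk
      linarith
  have := Complex.circleIntegral_eq_of_differentiable_on_annulus_off_countable (c := (0:ℂ)) hρ0 hρ4
    (f := fun z => q z / Dfun z) (s := ∅) countable_empty ?_ ?_
  · rw [this, h ρ hρ0 hρε]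
  · intro z hz
    simp only [mem_diff, mem_closedBall, mem_ball, dist_zero_right, not_lt] at hz
    obtain ⟨hz0, hD⟩ := hfact z hz.2 hz.1
    exact (((hqd z hz0).div (hDdiff z) hD).continuousAt).continuousWithinAt
  · intro z hz
    simp only [diff_empty, mem_diff, mem_ball, mem_closedBall, dist_zero_right, not_le] at hz
    obtain ⟨hz0, hD⟩ := hfact z (le_of_lt (lt_of_le_of_lt (by linarith) hz.2)) hz.1.le
    exact (hqd z hz0).div (hDdiff z) hD

lemma big_circle_tendsto (γ : ℝ) (hγ₀ : 0 < γ) (hγ₁ : γ < 2 * Real.pi) (C : ℝ) (hC : 0 ≤ C)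
    (q : ℂ → ℂ) (hqd : ∀ z : ℂ, z ≠ 0 → DifferentiableAt ℂ q z)
    (hqb : ∀ z : ℂ, 1 ≤ ‖z‖ → ‖q z‖ ≤ C / ‖z‖ * ‖Complex.exp (Complex.I * γ * z)‖) :
    Tendsto (fun M : ℕ => ∮ z in C(0, (M : ℝ) + 1/2), q z / Dfun z) atTop (nhds 0) := by
  have hπ := Real.pi_pos
  set δ : ℝ := min γ (2 * Real.pi - γ) with hδdef
  have hδ0 : 0 < δ := lt_min hγ₀ (by linarith)
  set K : ℝ := Real.exp (2 * Real.pi) / (1 - Real.exp (-Real.pi)) with hKdef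
  have hc₁ : 0 < 1 - Real.exp (-Real.pi) := by
    have : Real.exp (-Real.pi) < 1 := by
      rw [← Real.exp_zero]
      exact Real.exp_lt_exp.mpr (by linarith)
    linarith
  have hK0 : 0 < K := by positivity
  set F : ℕ → ℝ → ℂ := fun M θ =>
    deriv (circleMap 0 ((M : ℝ) + 1/2)) θ • (fun z => q z / Dfun z) (circleMap 0 ((M : ℝ) + 1/2) θ)
    with hFdef
  -- the integrand bound
  have hFb : ∀ M : ℕ, 1 ≤ M → ∀ θ : ℝ,
      ‖F M θ‖ ≤ C * K * Real.exp (-δ * |(circleMap 0 ((M : ℝ) + 1/2) θ).im|) := by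
    intro M hM θ
    have hM1 : (1:ℝ) ≤ (M:ℝ) := by exact_mod_cast hM
    set z : ℂ := circleMap 0 ((M : ℝ) + 1/2) θ with hzdef
    have hzn : ‖z‖ = (M : ℝ) + 1/2 := by
      rw [hzdef, norm_circleMap_zero, _root_.abs_of_nonneg (by linarith)]
    have hz1 : (1:ℝ) ≤ ‖z‖ := by rw [hzn]; linarith
    have hq1 := hqb z hz1
    have hr1 := ratio_bound γ hγ₀ hγ₁ M hM hzn
    have hDnn : (0:ℝ) ≤ ‖Dfun z‖ := norm_nonneg _
    have hnum : ‖q z‖ * ‖Dfun z‖⁻¹ ≤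
        C / ‖z‖ * (K * Real.exp (-δ * |z.im|)) * (‖Dfun z‖ * ‖Dfun z‖⁻¹) := by
      have h1 : ‖q z‖ ≤ C / ‖z‖ * (K * Real.exp (-δ * |z.im|) * ‖Dfun z‖) := by
        calc ‖q z‖ ≤ C / ‖z‖ * ‖Complex.exp (Complex.I * γ * z)‖ := hq1
          _ ≤ C / ‖z‖ * (K * Real.exp (-δ * |z.im|) * ‖Dfun z‖) := by
              apply mul_le_mul_of_nonneg_left hr1 (by positivity)
      calc ‖q z‖ * ‖Dfun z‖⁻¹ ≤
          (C / ‖z‖ * (K * Real.exp (-δ * |z.im|) * ‖Dfun z‖)) * ‖Dfun z‖⁻¹ :=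
            mul_le_mul_of_nonneg_right h1 (by positivity)
        _ = C / ‖z‖ * (K * Real.exp (-δ * |z.im|)) * (‖Dfun z‖ * ‖Dfun z‖⁻¹) := by ring
    have hDD : ‖Dfun z‖ * ‖Dfun z‖⁻¹ ≤ 1 := by
      rcases eq_or_ne (‖Dfun z‖) 0 with h0 | h0
      · rw [h0, zero_mul]; norm_num
      · rw [mul_inv_cancel₀ h0]
    have hFnorm : ‖F M θ‖ = ((M : ℝ) + 1/2) * (‖q z‖ * ‖Dfun z‖⁻¹) := by
      rw [hFdef]
      simp only [norm_smul, deriv_circleMap]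
      rw [norm_mul, norm_circleMap_zero,
        _root_.abs_of_nonneg (by linarith : (0:ℝ) ≤ (M:ℝ)+1/2),
        Complex.norm_I, mul_one, norm_div, ← hzdef]
      simp only [div_eq_mul_inv]
    rw [hFnorm]
    have hle2 : ‖q z‖ * ‖Dfun z‖⁻¹ ≤ C / ‖z‖ * (K * Real.exp (-δ * |z.im|)) := by
      calc ‖q z‖ * ‖Dfun z‖⁻¹ ≤
          C / ‖z‖ * (K * Real.exp (-δ * |z.im|)) * (‖Dfun z‖ * ‖Dfun z‖⁻¹) := hnum
        _ ≤ C / ‖z‖ * (K * Real.exp (-δ * |z.im|)) * 1 :=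
            mul_le_mul_of_nonneg_left hDD (by positivity)
        _ = C / ‖z‖ * (K * Real.exp (-δ * |z.im|)) := mul_one _
    calc ((M : ℝ) + 1/2) * (‖q z‖ * ‖Dfun z‖⁻¹) ≤
        ((M : ℝ) + 1/2) * (C / ‖z‖ * (K * Real.exp (-δ * |z.im|))) :=
          mul_le_mul_of_nonneg_left hle2 (by linarith)
      _ = C * K * Real.exp (-δ * |z.im|) := by
          rw [hzn]
          field_simp
  -- continuity of the integrand
  have hFc : ∀ M : ℕ, Continuous (F M) := by
    intro M
    have h1 : Continuous fun θ : ℝ => (fun z => q z / Dfun z) (circleMap 0 ((M : ℝ) + 1/2) θ) := by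
      rw [continuous_iff_continuousAt]
      intro θ
      have hz : ‖circleMap 0 ((M : ℝ) + 1/2) θ‖ = (M : ℝ) + 1/2 := by
        rw [norm_circleMap_zero, _root_.abs_of_nonneg (by positivity)]
      obtain ⟨hz0, hD⟩ := sphere_fact (by positivity) (half_int_abs_ne M) hz
      exact (((hqd _ hz0).div (hDdiff _) hD).continuousAt).comp
        (continuous_circleMap 0 _).continuousAt
    have h2 : Continuous fun θ : ℝ => deriv (circleMap 0 ((M : ℝ) + 1/2)) θ := by
      simp only [deriv_circleMap]
      exact (continuous_circleMap 0 _).mul continuous_const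
    exact h2.smul h1
  -- apply dominated convergence
  have hconv : Tendsto (fun M : ℕ => ∫ θ in (0:ℝ)..(2*Real.pi), F M θ) atTop
      (nhds (∫ θ in (0:ℝ)..(2*Real.pi), (0:ℂ))) := by
    apply intervalIntegral.tendsto_integral_filter_of_dominated_convergence
      (bound := fun _ => C * K)
    · exact Eventually.of_forall fun M => (hFc M).aestronglyMeasurable
    · filter_upwards [eventually_ge_atTop 1] with M hM
      apply Eventually.of_forall
      intro θ _
      calc ‖F M θ‖ ≤ C * K * Real.exp (-δ * |(circleMap 0 ((M : ℝ) + 1/2) θ).im|) :=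
            hFb M hM θ
        _ ≤ C * K * 1 := by
            apply mul_le_mul_of_nonneg_left _ (by positivity)
            rw [Real.exp_le_one_iff]
            have := abs_nonneg ((circleMap 0 ((M : ℝ) + 1/2) θ).im)
            nlinarith
        _ = C * K := mul_one _
    · exact intervalIntegrable_const
    · have hae : ∀ᵐ θ : ℝ, θ ∉ ({Real.pi, 2*Real.pi} : Set ℝ) :=
        Set.Countable.ae_notMem (Set.Countable.insert _ (countable_singleton _)) _
      filter_upwards [hae] with θ hθ hmem
      rw [Set.uIoc_of_le (by positivity : (0:ℝ) ≤ 2*Real.pi)] at hmem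
      simp only [Set.mem_insert_iff, Set.mem_singleton_iff, not_or] at hθ
      obtain ⟨hθ1, hθ2⟩ := hθ
      have hsin : Real.sin θ ≠ 0 := by
        intro h0
        rcases Real.sin_eq_zero_iff.mp h0 with ⟨k, hk⟩
        have hθpos := hmem.1
        have hθle := hmem.2
        have h1 : 0 < k := by
          by_contra hk'
          push_neg at hk'
          have hkr : (k:ℝ) ≤ 0 := by exact_mod_cast hk'
          nlinarith
        have h2 : k ≤ 2 := by
          by_contra hk'
          push_neg at hk'
          have hkr : (3:ℝ) ≤ (k:ℝ) := by exact_mod_cast hk'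
          nlinarith
        interval_cases k
        · push_cast at hk
          exact hθ1 (by linarith)
        · push_cast at hk
          exact hθ2 (by linarith)
      have hspos : 0 < δ * |Real.sin θ| := mul_pos hδ0 (abs_pos.mpr hsin)
      apply squeeze_zero_norm' (a := fun M : ℕ =>
        C * K * Real.exp (-(δ * |Real.sin θ|) * ((M:ℝ) + 1/2)))
      · filter_upwards [eventually_ge_atTop 1] with M hM
        have heq : -δ * |(circleMap 0 ((M:ℝ)+1/2) θ).im| =
            -(δ * |Real.sin θ|) * ((M:ℝ) + 1/2) := by
          rw [circleMap_im, abs_mul,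
            _root_.abs_of_nonneg (by positivity : (0:ℝ) ≤ (M:ℝ)+1/2)]
          ring
        calc ‖F M θ‖ ≤ C * K * Real.exp (-δ * |(circleMap 0 ((M:ℝ)+1/2) θ).im|) := hFb M hM θ
          _ = C * K * Real.exp (-(δ * |Real.sin θ|) * ((M:ℝ) + 1/2)) := by rw [heq]
      · have h1 : Tendsto (fun M : ℕ => ((M:ℝ) + 1/2)) atTop atTop :=
          tendsto_atTop_add_const_right _ _ tendsto_natCast_atTop_atTop
        have h2 : Tendsto (fun M : ℕ => -(δ * |Real.sin θ|) * ((M:ℝ) + 1/2)) atTop atBot :=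
          h1.const_mul_atTop_of_neg (neg_neg_iff_pos.mpr hspos)
        have h3 := Real.tendsto_exp_atBot.comp h2
        have h4 := h3.const_mul (C * K)
        simpa using h4
  have hzero : (∫ θ in (0:ℝ)..(2*Real.pi), (0:ℂ)) = 0 := by simp
  rw [hzero] at hconv
  exact hconv

end AuxRes

open Complex Filter Finset

/-- Let `f(z) = ∑_{k=1}^n a_k z^{-k}` with `n ≥ 1`. For every `γ ∈ (0, 2π)`, the
symmetric limit `lim_{M→∞} ∑_{1≤|m|≤M} e^{imγ} f(m)` exists and equals
`-2πi · Res_{z=0} [f(z) e^{iγz} / (e^{2πiz} - 1)]`. -/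
theorem statement0 (n : ℕ) (hn : 1 ≤ n) (a : ℕ → ℂ) (f : ℂ → ℂ)
    (hf : ∀ z : ℂ, f z = ∑ k ∈ Finset.Icc 1 n, a k * z ^ (-(k : ℤ)))
    (γ : ℝ) (hγ₀ : 0 < γ) (hγ₁ : γ < 2 * Real.pi) (R : ℂ)
    (hR : IsResidueAt (fun z : ℂ =>
      f z * Complex.exp (Complex.I * γ * z) /
        (Complex.exp (2 * Real.pi * Complex.I * z) - 1)) 0 R) :
    Tendsto (fun M : ℕ =>
        ∑ m ∈ (Finset.Icc (-(M : ℤ)) (M : ℤ)).filter (· ≠ 0),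
          Complex.exp (Complex.I * (m : ℂ) * γ) * f (m : ℂ))
      atTop (nhds (-(2 * Real.pi * Complex.I) * R)) := by
  classical
  set q : ℂ → ℂ := fun z => f z * Complex.exp (Complex.I * γ * z) with hqdef
  have hfd : ∀ z : ℂ, z ≠ 0 → DifferentiableAt ℂ f z := by
    intro z hz
    rw [funext hf]
    apply DifferentiableAt.fun_sum
    intro k hk
    exact (differentiableAt_const _).mul (differentiableAt_zpow.mpr (Or.inl hz))
  have hqd : ∀ z : ℂ, z ≠ 0 → DifferentiableAt ℂ q z := by
    intro z hz
    exact (hfd z hz).mul ((differentiableAt_id.const_mul (Complex.I * (γ : ℂ))).cexp)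
  set C : ℝ := ∑ k ∈ Finset.Icc 1 n, ‖a k‖ with hCdef
  have hC0 : 0 ≤ C := Finset.sum_nonneg fun k _ => norm_nonneg _
  have hqb : ∀ z : ℂ, 1 ≤ ‖z‖ → ‖q z‖ ≤ C / ‖z‖ * ‖Complex.exp (Complex.I * γ * z)‖ := by
    intro z hz
    have hfz : ‖f z‖ ≤ C / ‖z‖ := by
      rw [hf z]
      calc ‖∑ k ∈ Finset.Icc 1 n, a k * z ^ (-(k : ℤ))‖
          ≤ ∑ k ∈ Finset.Icc 1 n, ‖a k * z ^ (-(k : ℤ))‖ := norm_sum_le _ _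
        _ ≤ ∑ k ∈ Finset.Icc 1 n, ‖a k‖ * ‖z‖⁻¹ := by
            apply Finset.sum_le_sum
            intro k hk
            rw [norm_mul, norm_zpow]
            apply mul_le_mul_of_nonneg_left _ (norm_nonneg _)
            have hk1 : 1 ≤ k := (Finset.mem_Icc.mp hk).1
            have hle : ‖z‖ ^ (-(k : ℤ)) ≤ ‖z‖ ^ (-1 : ℤ) := by
              apply zpow_le_zpow_right₀ hz
              have : (1 : ℤ) ≤ (k : ℤ) := by exact_mod_cast hk1
              omega
            simpa [zpow_neg_one] using hle
        _ = C / ‖z‖ := by rw [← Finset.sum_mul, div_eq_mul_inv]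
    simp only [hqdef]
    rw [norm_mul]
    exact mul_le_mul_of_nonneg_right hfz (norm_nonneg _)
  obtain ⟨ε, hε, hres⟩ := hR
  have hres2 : ∀ r : ℝ, 0 < r → r < ε →
      (∮ z in C(0, r), q z / Dfun z) = 2 * Real.pi * Complex.I * R := by
    intro r h1 h2
    exact hres r h1 h2
  have hinner := inner_integral q hqd ε hε hres2
  have hbig := big_circle_tendsto γ hγ₀ hγ₁ C hC0 q hqd hqb
  have hkey := key_identity q hqd R hinner
  have hlim := hbig.sub_const (2 * Real.pi * Complex.I * R)
  rw [zero_sub] at hlim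
  have heq : -(2 * (Real.pi : ℂ) * Complex.I * R) = -(2 * Real.pi * Complex.I) * R := by ring
  rw [heq] at hlim
  apply hlim.congr'
  filter_upwards [eventually_ge_atTop 1] with M hM
  have hsum : ∑ m ∈ (Finset.Icc (-(M : ℤ)) (M : ℤ)).filter (· ≠ 0),
      Complex.exp (Complex.I * (m : ℂ) * γ) * f (m : ℂ) =
      ∑ m ∈ (Finset.Icc (-(M : ℤ)) (M : ℤ)).filter (· ≠ 0), q ((m : ℤ) : ℂ) := by
    apply Finset.sum_congr rfl
    intro m hm
    simp only [hqdef]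
    rw [show Complex.I * ((m : ℤ) : ℂ) * (γ : ℂ) = Complex.I * (γ : ℂ) * ((m : ℤ) : ℂ) from by
      ring, mul_comm]
  rw [hsum, hkey M hM]
end

section
/- For every γ ∈ (0, 2π), the limit lim_{M→∞} ∑_{m=1}^{M} (e^{imγ} − e^{−imγ})/m exists and equals −2πi · Res_{z=0} [ e^{iγz} / (z (e^{2πiz} − 1)) ]. -/
open Complex Filter Finset

lemma tendsto_e1 : Tendsto (fun w : ℂ => (Complex.exp w - 1) / w) (nhdsWithin 0 {(0:ℂ)}ᶜ) (nhds 1) := by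
  have h := (Complex.hasDerivAt_exp 0)
  rw [hasDerivAt_iff_tendsto_slope] at h
  simpa [slope_fun_def, Complex.exp_zero, div_eq_inv_mul] using h

lemma tendsto_E : Tendsto (fun w : ℂ => (Complex.exp w - 1 - w) / w ^ 2) (nhdsWithin 0 {(0:ℂ)}ᶜ)
    (nhds (1/2)) := by
  rw [tendsto_iff_norm_sub_tendsto_zero]
  have key : ∀ w : ℂ, w ≠ 0 → ‖w‖ ≤ 1 →
      ‖(Complex.exp w - 1 - w) / w ^ 2 - 1/2‖ ≤ ‖w‖ := by
    intro w hw h1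
    have hb := Complex.exp_bound (x := w) h1 (n := 3) (by norm_num)
    have hsum : ∑ m ∈ range 3, w ^ m / m.factorial = 1 + w + w^2/2 := by
      simp [Finset.sum_range_succ]
    rw [hsum] at hb
    have hw2 : (w:ℂ)^2 ≠ 0 := pow_ne_zero _ hw
    have heq : (Complex.exp w - 1 - w) / w ^ 2 - 1/2 = (Complex.exp w - (1 + w + w^2/2)) / w^2 := by
      field_simp
      ring
    rw [heq, norm_div, div_le_iff₀ (norm_pos_iff.mpr hw2)]
    norm_num [Nat.factorial] at hb
    have h0 : (0:ℝ) ≤ ‖w‖ := norm_nonneg w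
    calc ‖Complex.exp w - (1 + w + w^2/2)‖ ≤ ‖w‖ ^ 3 * (2/9) := hb
    _ ≤ ‖w‖ * ‖(w:ℂ)^2‖ := by
        simp only [norm_pow]
        show ‖w‖ ^ 3 * (2/9) ≤ ‖w‖ * ‖w‖ ^ 2
        nlinarith [pow_nonneg h0 3]
  have hb : Tendsto (fun w : ℂ => ‖w‖) (nhdsWithin 0 {(0:ℂ)}ᶜ) (nhds 0) := by
    have : Tendsto (fun w : ℂ => ‖w‖) (nhds 0) (nhds 0) := by
      simpa using (continuous_norm.tendsto (0:ℂ))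
    exact this.mono_left nhdsWithin_le_nhds
  apply squeeze_zero_norm' ?_ hb
  filter_upwards [self_mem_nhdsWithin,
    inter_mem_nhdsWithin _ (Metric.closedBall_mem_nhds (0:ℂ) one_pos)] with w hw hw1
  simp only [norm_norm]
  exact key w hw (by simpa using (Metric.mem_closedBall.mp hw1.2))

noncomputable def psi (γ : ℝ) : ℂ → ℂ := fun z =>
  if z = 0 then (((γ:ℂ) - Real.pi) / (2 * Real.pi)) else
    Complex.exp (Complex.I * γ * z) / (Complex.exp (2 * Real.pi * Complex.I * z) - 1)
      - (2 * Real.pi * Complex.I * z)⁻¹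

lemma exp_two_pi_ne_one {z : ℂ} (hz : z ≠ 0) (hz1 : ‖z‖ < 1) :
    Complex.exp (2 * Real.pi * Complex.I * z) ≠ 1 := by
  intro h
  rw [Complex.exp_eq_one_iff] at h
  obtain ⟨n, hn⟩ := h
  have h2 : (2 * (Real.pi:ℂ) * Complex.I) ≠ 0 := by
    simp [Real.pi_ne_zero, Complex.I_ne_zero]
  have hzn : z = (n : ℂ) := by
    apply mul_left_cancel₀ h2
    rw [hn]; ring
  have hn0 : n ≠ 0 := by rintro rfl; simp at hzn; exact hz hzn
  rw [hzn] at hz1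
  have : (1:ℝ) ≤ |(n:ℝ)| := by
    rw [← Int.cast_abs]
    exact_mod_cast Int.one_le_abs hn0
  simp only [Complex.norm_intCast] at hz1
  linarith

lemma tendsto_psi (γ : ℝ) (hγ : 0 < γ) :
    Tendsto (psi γ) (nhdsWithin 0 {(0:ℂ)}ᶜ) (nhds (((γ:ℂ) - Real.pi) / (2 * Real.pi))) := by
  have hγC : (γ:ℂ) ≠ 0 := by exact_mod_cast hγ.ne'
  have hπC : ((Real.pi:ℝ):ℂ) ≠ 0 := by exact_mod_cast Real.pi_ne_zero
  have hc1 : (Complex.I * γ) ≠ 0 := mul_ne_zero Complex.I_ne_zero hγC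
  have hc2 : (2 * (Real.pi:ℂ) * Complex.I) ≠ 0 := by
    simp [Real.pi_ne_zero, Complex.I_ne_zero]
  -- the three auxiliary limits
  have hmap : ∀ c : ℂ, c ≠ 0 → Tendsto (fun z : ℂ => c * z) (nhdsWithin 0 {(0:ℂ)}ᶜ)
      (nhdsWithin 0 {(0:ℂ)}ᶜ) := by
    intro c hc
    rw [tendsto_nhdsWithin_iff]
    constructor
    · have : Tendsto (fun z : ℂ => c * z) (nhds 0) (nhds 0) := by
        simpa using (Continuous.tendsto (by fun_prop : Continuous fun z : ℂ => c * z) (0:ℂ))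
      exact this.mono_left nhdsWithin_le_nhds
    · filter_upwards [self_mem_nhdsWithin] with z hz
      exact fun h => hz (by simpa [mul_eq_zero, hc] using h)
  have hA : Tendsto (fun z : ℂ => (Complex.exp (Complex.I * γ * z) - 1) / (Complex.I * γ * z))
      (nhdsWithin 0 {(0:ℂ)}ᶜ) (nhds 1) := by
    exact tendsto_e1.comp (hmap _ hc1)
  have hB : Tendsto (fun z : ℂ =>
      (Complex.exp (2 * Real.pi * Complex.I * z) - 1) / (2 * Real.pi * Complex.I * z))
      (nhdsWithin 0 {(0:ℂ)}ᶜ) (nhds 1) := by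
    exact tendsto_e1.comp (hmap _ hc2)
  have hC : Tendsto (fun z : ℂ =>
      (Complex.exp (2 * Real.pi * Complex.I * z) - 1 - 2 * Real.pi * Complex.I * z)
        / (2 * Real.pi * Complex.I * z) ^ 2)
      (nhdsWithin 0 {(0:ℂ)}ᶜ) (nhds (1/2)) := by
    exact tendsto_E.comp (hmap _ hc2)
  -- the combination
  have hcomb : Tendsto (fun z : ℂ =>
      ((Complex.I * γ / (2 * Real.pi * Complex.I)) *
          ((Complex.exp (Complex.I * γ * z) - 1) / (Complex.I * γ * z))
        - (Complex.exp (2 * Real.pi * Complex.I * z) - 1 - 2 * Real.pi * Complex.I * z)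
            / (2 * Real.pi * Complex.I * z) ^ 2)
      / ((Complex.exp (2 * Real.pi * Complex.I * z) - 1) / (2 * Real.pi * Complex.I * z)))
      (nhdsWithin 0 {(0:ℂ)}ᶜ)
      (nhds ((Complex.I * γ / (2 * Real.pi * Complex.I)) * 1 - 1/2)) := by
    simpa [Pi.div_def] using ((hA.const_mul (Complex.I * γ / (2 * Real.pi * Complex.I))).sub hC).div hB one_ne_zero
  have hval : (Complex.I * γ / (2 * Real.pi * Complex.I)) * 1 - 1/2
      = ((γ:ℂ) - Real.pi) / (2 * Real.pi) := by
    field_simp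
  rw [hval] at hcomb
  refine hcomb.congr' ?_
  filter_upwards [self_mem_nhdsWithin,
    inter_mem_nhdsWithin _ (Metric.ball_mem_nhds (0:ℂ) one_pos)] with z hz hz1
  have hz0 : z ≠ 0 := hz
  have habs : ‖z‖ < 1 := by simpa using hz1.2
  have hE : Complex.exp (2 * Real.pi * Complex.I * z) - 1 ≠ 0 :=
    sub_ne_zero.mpr (exp_two_pi_ne_one hz0 habs)
  simp only [psi, if_neg hz0]
  have hB0 : (Complex.exp (2 * Real.pi * Complex.I * z) - 1) / (2 * Real.pi * Complex.I * z) ≠ 0 :=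
    div_ne_zero hE (mul_ne_zero hc2 hz0)
  rw [div_eq_iff hB0]
  field_simp [hz0, hγC, hπC, Complex.I_ne_zero, hE]
  have hE' := hE
  ring_nf at hE' ⊢
  field_simp
  ring

lemma psi_differentiableAt (γ : ℝ) {z : ℂ} (hz : z ≠ 0) (hz1 : ‖z‖ < 1) :
    DifferentiableAt ℂ (psi γ) z := by
  have hE : Complex.exp (2 * Real.pi * Complex.I * z) - 1 ≠ 0 :=
    sub_ne_zero.mpr (exp_two_pi_ne_one hz hz1)
  have hform : DifferentiableAt ℂ (fun w : ℂ =>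
      Complex.exp (Complex.I * γ * w) / (Complex.exp (2 * Real.pi * Complex.I * w) - 1)
        - (2 * Real.pi * Complex.I * w)⁻¹) z := by
    apply DifferentiableAt.sub
    · exact DifferentiableAt.div
        (Complex.differentiable_exp.differentiableAt.comp z (by fun_prop))
        ((Complex.differentiable_exp.differentiableAt.comp z (by fun_prop)).sub_const 1) hE
    · exact DifferentiableAt.inv (by fun_prop)
        (mul_ne_zero (by simp [Real.pi_ne_zero, Complex.I_ne_zero]) hz)
  apply hform.congr_of_eventuallyEq
  filter_upwards [isOpen_compl_singleton.mem_nhds (by simpa using hz : z ∈ ({0}ᶜ : Set ℂ))] with w hw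
  simp [psi, if_neg (by simpa using hw : w ≠ 0)]

lemma psi_continuousOn (γ : ℝ) (hγ : 0 < γ) {r : ℝ} (hr1 : r < 1) :
    ContinuousOn (psi γ) (Metric.closedBall 0 r) := by
  intro z hz
  rcases eq_or_ne z 0 with rfl | hz0
  · apply ContinuousAt.continuousWithinAt
    rw [ContinuousAt, ← nhdsNE_sup_pure 0, tendsto_sup]
    refine ⟨?_, tendsto_pure_nhds _ _⟩
    have := tendsto_psi γ hγ
    simpa [psi] using this
  · have hz1 : ‖z‖ < 1 := by
      have := Metric.mem_closedBall.mp hz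
      simp only [dist_zero_right] at this
      calc ‖z‖ ≤ r := by simpa using this
      _ < 1 := hr1
    exact (psi_differentiableAt γ hz0 hz1).continuousAt.continuousWithinAt

lemma residue_value (γ : ℝ) (hγ₀ : 0 < γ) (R : ℂ)
    (hR : IsResidueAt (fun z : ℂ =>
      Complex.exp (Complex.I * γ * z) /
        (z * (Complex.exp (2 * Real.pi * Complex.I * z) - 1))) 0 R) :
    R = ((γ:ℂ) - Real.pi) / (2 * Real.pi) := by
  obtain ⟨ε, hε, hint⟩ := hR
  set r : ℝ := min (ε/2) (1/2) with hrdef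
  have hr0 : 0 < r := lt_min (by linarith) (by norm_num)
  have hrε : r < ε := lt_of_le_of_lt (min_le_left _ _) (by linarith)
  have hr1 : r < 1 := lt_of_le_of_lt (min_le_right _ _) (by norm_num)
  have hπI : (2 * (Real.pi:ℂ) * Complex.I) ≠ 0 := by
    simp [Real.pi_ne_zero, Complex.I_ne_zero]
  -- facts about points on the sphere
  have hsph : ∀ z ∈ Metric.sphere (0:ℂ) r, z ≠ 0 ∧
      Complex.exp (2 * Real.pi * Complex.I * z) - 1 ≠ 0 := by
    intro z hzs
    have habs : ‖z‖ = r := by simpa using hzs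
    have hz0 : z ≠ 0 := by
      intro h
      rw [h, norm_zero] at habs
      exact hr0.ne habs
    exact ⟨hz0, sub_ne_zero.mpr (exp_two_pi_ne_one hz0 (habs ▸ hr1))⟩
  -- Cauchy integral formula for psi
  have hcauchy := Complex.circleIntegral_sub_inv_smul_of_differentiable_on_off_countable
    (s := {(0:ℂ)}) (Set.countable_singleton 0) (Metric.mem_ball_self hr0)
    (psi_continuousOn γ hγ₀ hr1)
    (fun x hx => psi_differentiableAt γ (by simpa using hx.2)
      (lt_of_lt_of_le (by simpa using Metric.mem_ball.mp hx.1) hr1.le))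
  -- integrability of g
  have hgint : CircleIntegrable (fun z : ℂ => Complex.exp (Complex.I * γ * z) /
      (z * (Complex.exp (2 * Real.pi * Complex.I * z) - 1))) 0 r := by
    apply ContinuousOn.circleIntegrable hr0.le
    intro z hzs
    obtain ⟨hz0, hE⟩ := hsph z hzs
    apply ContinuousAt.continuousWithinAt
    apply ContinuousAt.div
    · exact Complex.continuous_exp.continuousAt.comp (by fun_prop)
    · exact (continuous_id.mul ((Complex.continuous_exp.comp (by fun_prop)).sub
        continuous_const)).continuousAt
    · exact mul_ne_zero hz0 hE
  -- integrability of z^(-2)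
  have hzint : CircleIntegrable (fun z : ℂ => (z - 0) ^ (-2 : ℤ)) 0 r := by
    rw [circleIntegrable_sub_zpow_iff]
    right; right
    intro h
    have := Metric.mem_sphere.mp h
    simp [abs_of_pos hr0] at this
    exact hr0.ne this
  -- rewrite the Cauchy integral
  have hsplit : (∮ z in C((0:ℂ), r), (z - 0)⁻¹ • psi γ z)
      = (∮ z in C((0:ℂ), r), (Complex.exp (Complex.I * γ * z) /
          (z * (Complex.exp (2 * Real.pi * Complex.I * z) - 1))
        - (2 * Real.pi * Complex.I)⁻¹ * (z - 0) ^ (-2 : ℤ))) := by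
    apply circleIntegral.integral_congr hr0.le
    intro z hzs
    obtain ⟨hz0, hE⟩ := hsph z hzs
    simp only [psi, if_neg hz0, sub_zero, smul_eq_mul, zpow_neg, zpow_two]
    field_simp
  have hzero : (∮ z in C((0:ℂ), r), (z - 0) ^ (-2 : ℤ)) = 0 :=
    circleIntegral.integral_sub_zpow_of_ne (by decide) 0 0 r
  have hsub : (∮ z in C((0:ℂ), r), (Complex.exp (Complex.I * γ * z) /
          (z * (Complex.exp (2 * Real.pi * Complex.I * z) - 1))
        - (2 * Real.pi * Complex.I)⁻¹ * (z - 0) ^ (-2 : ℤ)))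
      = (∮ z in C((0:ℂ), r), Complex.exp (Complex.I * γ * z) /
          (z * (Complex.exp (2 * Real.pi * Complex.I * z) - 1)))
        - (2 * Real.pi * Complex.I)⁻¹ * (∮ z in C((0:ℂ), r), (z - 0) ^ (-2 : ℤ)) := by
    rw [← circleIntegral.integral_const_mul]
    exact circleIntegral.integral_sub hgint (hzint.smul ((2 * Real.pi * Complex.I)⁻¹))
  have hval := hint r hr0 hrε
  rw [hsplit, hsub, hzero, hval, mul_zero, sub_zero] at hcauchy
  have hpsi0 : psi γ 0 = ((γ:ℂ) - Real.pi) / (2 * Real.pi) := by simp [psi]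
  rw [hpsi0, smul_eq_mul] at hcauchy
  exact mul_left_cancel₀ hπI (by simpa [mul_assoc] using hcauchy)

lemma exp_I_ne_one {t : ℝ} (ht0 : t ≠ 0) (ht1 : |t| < 2 * Real.pi) :
    Complex.exp (Complex.I * t) ≠ 1 := by
  intro h
  rw [Complex.exp_eq_one_iff] at h
  obtain ⟨n, hn⟩ := h
  have hIn : Complex.I * t = Complex.I * (n * (2 * Real.pi)) := by rw [hn]; push_cast; ring
  have ht : (t:ℂ) = ((n * (2 * Real.pi) : ℝ) : ℂ) := by
    have := mul_left_cancel₀ Complex.I_ne_zero hIn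
    push_cast
    exact this
  have htr : t = n * (2 * Real.pi) := by exact_mod_cast ht
  have hn0 : n ≠ 0 := by rintro rfl; simp at htr; exact ht0 htr
  have h1 : (1:ℝ) ≤ |(n:ℝ)| := by exact_mod_cast Int.one_le_abs hn0
  rw [htr] at ht1
  rw [abs_mul, abs_of_pos (by positivity : (0:ℝ) < 2 * Real.pi)] at ht1
  nlinarith [Real.pi_pos]

lemma norm_exp_I (t : ℝ) : ‖Complex.exp (Complex.I * t)‖ = 1 := by
  rw [Complex.norm_exp]
  simp

lemma geom_partial_bound {u : ℂ} (hu : ‖u‖ = 1) (hu1 : u ≠ 1) (n : ℕ) :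
    ‖∑ i ∈ range n, u ^ (i + 1)‖ ≤ 2 / ‖u - 1‖ := by
  have hsum : ∑ i ∈ range n, u ^ (i + 1) = u * ((u ^ n - 1) / (u - 1)) := by
    simp_rw [pow_succ']
    rw [← Finset.mul_sum, geom_sum_eq hu1]
  rw [hsum, norm_mul, hu, one_mul, norm_div]
  have h2 : ‖u ^ n - 1‖ ≤ 2 := by
    calc ‖u ^ n - 1‖ ≤ ‖u ^ n‖ + ‖(1:ℂ)‖ := norm_sub_le _ _
    _ = 2 := by rw [norm_pow, hu]; norm_num
  gcongr

lemma sum_tendsto_aux (γ : ℝ) (hγ₀ : 0 < γ) (hγ₁ : γ < 2 * Real.pi) :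
    Tendsto (fun M : ℕ => ∑ m ∈ Finset.Icc 1 M,
        (Complex.exp (Complex.I * γ) ^ m - Complex.exp (-(Complex.I * γ)) ^ m) / (m : ℂ))
      atTop (nhds (Complex.I * ((Real.pi : ℂ) - γ))) := by
  set z : ℂ := Complex.exp (Complex.I * γ) with hzdef
  set w : ℂ := Complex.exp (-(Complex.I * γ)) with hwdef
  have habs : |γ| < 2 * Real.pi := by rw [abs_of_pos hγ₀]; exact hγ₁
  have hz1 : z ≠ 1 := exp_I_ne_one hγ₀.ne' habs
  have hw1 : w ≠ 1 := by
    have : w = Complex.exp (Complex.I * ((-γ : ℝ) : ℂ)) := by rw [hwdef]; push_cast; ring_nf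
    rw [this]
    exact exp_I_ne_one (neg_ne_zero.mpr hγ₀.ne') (by rwa [abs_neg])
  have hzn : ‖z‖ = 1 := norm_exp_I γ
  have hwn : ‖w‖ = 1 := by
    have : w = Complex.exp (Complex.I * ((-γ : ℝ) : ℂ)) := by rw [hwdef]; push_cast; ring_nf
    rw [this]; exact norm_exp_I (-γ)
  -- Step 1: convergence of partial sums
  have hf0 : Tendsto (fun n : ℕ => ((n:ℝ) + 1)⁻¹) atTop (nhds 0) := by
    simpa [one_div] using tendsto_one_div_add_atTop_nhds_zero_nat (𝕜 := ℝ)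
  have hfa : Antitone (fun n : ℕ => ((n:ℝ) + 1)⁻¹) := by
    intro a b hab
    have h1 : (a:ℝ) + 1 ≤ (b:ℝ) + 1 := by exact_mod_cast Nat.succ_le_succ hab
    exact inv_anti₀ (by positivity) h1
  have hbound : ∀ n : ℕ, ‖∑ i ∈ range n, (z ^ (i+1) - w ^ (i+1))‖ ≤ 2 / ‖z - 1‖ + 2 / ‖w - 1‖ := by
    intro n
    calc ‖∑ i ∈ range n, (z ^ (i+1) - w ^ (i+1))‖
        = ‖(∑ i ∈ range n, z ^ (i+1)) - ∑ i ∈ range n, w ^ (i+1)‖ := by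
          rw [Finset.sum_sub_distrib]
    _ ≤ ‖∑ i ∈ range n, z ^ (i+1)‖ + ‖∑ i ∈ range n, w ^ (i+1)‖ := norm_sub_le _ _
    _ ≤ 2 / ‖z - 1‖ + 2 / ‖w - 1‖ :=
        add_le_add (geom_partial_bound hzn hz1 n) (geom_partial_bound hwn hw1 n)
  have hcauchy : CauchySeq (fun n : ℕ =>
      ∑ i ∈ range n, ((i:ℝ) + 1)⁻¹ • (z ^ (i+1) - w ^ (i+1))) :=
    hfa.cauchySeq_series_mul_of_tendsto_zero_of_bounded hf0 hbound
  obtain ⟨L, hL⟩ := cauchySeq_tendsto_of_complete hcauchy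
  -- identify the partial sums with Icc sums
  have hId : ∀ M : ℕ, ∑ i ∈ range M, ((i:ℝ) + 1)⁻¹ • (z ^ (i+1) - w ^ (i+1))
      = ∑ m ∈ Finset.Icc 1 M, (z ^ m - w ^ m) / (m : ℂ) := by
    intro M
    rw [← Finset.Ico_add_one_right_eq_Icc, Finset.sum_Ico_eq_sum_range]
    simp only [Nat.add_sub_cancel, Nat.succ_sub_one]
    apply Finset.sum_congr rfl
    intro i _
    rw [Complex.real_smul, add_comm 1 i]
    push_cast
    rw [inv_mul_eq_div]
  have hS : Tendsto (fun M : ℕ => ∑ m ∈ Finset.Icc 1 M, (z ^ m - w ^ m) / (m : ℂ))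
      atTop (nhds L) := by
    refine hL.congr fun M => hId M
  -- Step 2: Abel's theorem identifies L
  set F : ℕ → ℂ := fun n => (z ^ n - w ^ n) / (n : ℂ) with hFdef
  have hRange : Tendsto (fun n : ℕ => ∑ i ∈ range n, F i) atTop (nhds L) := by
    rw [← tendsto_add_atTop_iff_nat 1]
    have : ∀ n : ℕ, ∑ i ∈ range (n + 1), F i = ∑ m ∈ Finset.Icc 1 n, (z ^ m - w ^ m) / (m : ℂ) := by
      intro n
      rw [Finset.sum_range_succ']
      have hF0 : F 0 = 0 := by simp [hFdef]
      rw [hF0, add_zero, ← Finset.Ico_add_one_right_eq_Icc, Finset.sum_Ico_eq_sum_range]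
      simp only [Nat.add_sub_cancel, Nat.succ_sub_one]
      apply Finset.sum_congr rfl
      intro i _
      simp [hFdef, add_comm 1 i]
    exact hS.congr (fun n => (this n).symm)
  have hAbel := Complex.tendsto_tsum_powerSeries_nhdsWithin_lt hRange
  -- the limit function
  set G : ℂ → ℂ := fun x => Complex.log (1 - x * w) - Complex.log (1 - x * z) with hGdef
  -- 1 - z and 1 - w are in the slit plane
  have hre : (1 - z).re = 1 - Real.cos γ := by
    rw [hzdef, mul_comm Complex.I (γ:ℂ)]
    simp [Complex.sub_re, Complex.exp_ofReal_mul_I_re]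
  have him : (1 - z).im = -Real.sin γ := by
    rw [hzdef, mul_comm Complex.I (γ:ℂ)]
    simp [Complex.sub_im, Complex.exp_ofReal_mul_I_im]
  have hslit : (1 - z) ∈ Complex.slitPlane := by
    rw [Complex.mem_slitPlane_iff, hre, him]
    by_cases hs : Real.sin γ = 0
    · left
      rw [Real.sin_eq_zero_iff] at hs
      obtain ⟨n, hn⟩ := hs
      have hpi := Real.pi_pos
      have hn1 : n = 1 := by
        have h0 : 0 < (n:ℝ) * Real.pi := hn ▸ hγ₀
        have h2 : (n:ℝ) * Real.pi < 2 * Real.pi := hn ▸ hγ₁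
        have hn0 : 0 < (n:ℝ) := by nlinarith
        have hn2 : (n:ℝ) < 2 := by nlinarith
        have : 0 < n := by exact_mod_cast hn0
        have : n < 2 := by exact_mod_cast hn2
        omega
      rw [hn1] at hn
      simp at hn
      rw [← hn, Real.cos_pi]
      norm_num
    · right
      simpa using hs
  -- slit plane membership for 1 - w
  have hwconj : (1 - w) = (starRingEnd ℂ) (1 - z) := by
    rw [hzdef, hwdef, map_sub, map_one, ← Complex.exp_conj]
    congr 2
    simp [map_mul, Complex.conj_I, Complex.conj_ofReal]
  have hslitw : (1 - w) ∈ Complex.slitPlane := by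
    rw [hwconj, Complex.mem_slitPlane_iff]
    rw [Complex.mem_slitPlane_iff] at hslit
    rcases hslit with h | h
    · left; simpa using h
    · right; simpa using h
  -- argument of 1 - z
  have hargz : (1 - z).arg = (γ - Real.pi) / 2 := by
    have hpi := Real.pi_pos
    have hsin : 0 < Real.sin (γ/2) := Real.sin_pos_of_pos_of_lt_pi (by linarith) (by linarith)
    have hcosv : Real.cos ((γ - Real.pi)/2) = Real.sin (γ/2) := by
      rw [show (γ - Real.pi)/2 = -(Real.pi/2 - γ/2) by ring, Real.cos_neg,
        Real.cos_pi_div_two_sub]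
    have hsinv : Real.sin ((γ - Real.pi)/2) = -Real.cos (γ/2) := by
      rw [show (γ - Real.pi)/2 = -(Real.pi/2 - γ/2) by ring, Real.sin_neg,
        Real.sin_pi_div_two_sub]
    have hrepr : (1 - z) = ((2 * Real.sin (γ/2) : ℝ) : ℂ) *
        (Real.cos ((γ - Real.pi)/2) + Real.sin ((γ - Real.pi)/2) * Complex.I) := by
      apply Complex.ext
      · rw [hre]
        rw [hcosv]
        have hc2 := Real.cos_two_mul (γ/2)
        have hsc := Real.sin_sq_add_cos_sq (γ/2)
        rw [show 2 * (γ/2) = γ by ring] at hc2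
        simp only [Complex.add_re, Complex.mul_re, Complex.mul_im, Complex.add_im,
          Complex.ofReal_re, Complex.ofReal_im, Complex.I_re, Complex.I_im]
        nlinarith
      · rw [him]
        rw [hsinv]
        have hs2 := Real.sin_two_mul (γ/2)
        rw [show 2 * (γ/2) = γ by ring] at hs2
        simp only [Complex.add_re, Complex.mul_re, Complex.mul_im, Complex.add_im,
          Complex.ofReal_re, Complex.ofReal_im, Complex.I_re, Complex.I_im]
        nlinarith
    rw [hrepr, Complex.ofReal_cos, Complex.ofReal_sin]
    exact Complex.arg_mul_cos_add_sin_mul_I (by positivity)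
      ⟨by linarith, by linarith⟩
  have hargne : (1 - z).arg ≠ Real.pi := by
    rw [hargz]
    have hpi := Real.pi_pos
    intro h; linarith
  have hlogw : Complex.log (1 - w) = (starRingEnd ℂ) (Complex.log (1 - z)) := by
    rw [hwconj, Complex.log_conj _ hargne]
  have hG1 : G 1 = Complex.I * ((Real.pi : ℂ) - γ) := by
    show Complex.log (1 - 1 * w) - Complex.log (1 - 1 * z) = _
    rw [one_mul, one_mul, hlogw]
    have him2 : (Complex.log (1 - z)).im = (γ - Real.pi)/2 := by
      rw [Complex.log_im, hargz]
    have h2 := Complex.sub_conj (Complex.log (1 - z))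
    rw [him2] at h2
    have h3 : (starRingEnd ℂ) (Complex.log (1 - z)) - Complex.log (1 - z)
        = -((((2:ℝ) * ((γ - Real.pi)/2) : ℝ) : ℂ) * Complex.I) := by
      rw [← h2]; ring
    rw [h3]
    push_cast
    ring
  -- continuity of G at 1 along the filter
  have hGtendsto : Tendsto G (Filter.map Complex.ofReal (nhdsWithin 1 (Set.Iio 1)))
      (nhds (G 1)) := by
    have hco : ContinuousAt G 1 := by
      apply ContinuousAt.sub
      · exact (continuousAt_clog (by simpa using hslitw)).comp
          ((continuous_const.sub (continuous_id.mul continuous_const)).continuousAt)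
      · exact (continuousAt_clog (by simpa using hslit)).comp
          ((continuous_const.sub (continuous_id.mul continuous_const)).continuousAt)
    apply hco.tendsto.mono_left
    calc Filter.map Complex.ofReal (nhdsWithin 1 (Set.Iio 1))
        ≤ Filter.map Complex.ofReal (nhds 1) := Filter.map_mono nhdsWithin_le_nhds
    _ ≤ nhds ((1:ℝ) : ℂ) := Complex.continuous_ofReal.tendsto 1
    _ = nhds (1:ℂ) := by norm_num
  -- the tsum agrees with G near 1
  have hEq : (fun x : ℂ => ∑' n, F n * x ^ n)
      =ᶠ[Filter.map Complex.ofReal (nhdsWithin 1 (Set.Iio 1))] G := by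
    rw [Filter.EventuallyEq, Filter.eventually_map]
    filter_upwards [Ioo_mem_nhdsLT_of_mem (⟨(by norm_num : (-1:ℝ) < 1), le_refl (1:ℝ)⟩ :
      (1:ℝ) ∈ Set.Ioc (-1 : ℝ) 1)] with x hx
    have hxabs : |x| < 1 := abs_lt.mpr ⟨hx.1, hx.2⟩
    have hxz : ‖(x:ℂ) * z‖ < 1 := by
      rw [norm_mul, hzn, mul_one, Complex.norm_real]; exact hxabs
    have hxw : ‖(x:ℂ) * w‖ < 1 := by
      rw [norm_mul, hwn, mul_one, Complex.norm_real]; exact hxabs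
    have h1 := Complex.hasSum_taylorSeries_neg_log hxz
    have h2 := Complex.hasSum_taylorSeries_neg_log hxw
    have h3 := h1.sub h2
    have h4 : (fun n : ℕ => ((x:ℂ) * z) ^ n / n - ((x:ℂ) * w) ^ n / n)
        = fun n : ℕ => F n * (x:ℂ) ^ n := by
      funext n
      simp only [hFdef, mul_pow]
      ring
    rw [h4] at h3
    rw [h3.tsum_eq]
    show _ = Complex.log (1 - (x:ℂ) * w) - Complex.log (1 - (x:ℂ) * z)
    ring
  have hne : (Filter.map Complex.ofReal (nhdsWithin (1:ℝ) (Set.Iio 1))).NeBot :=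
    Filter.map_neBot
  have hL2 : Tendsto (fun x : ℂ => ∑' n, F n * x ^ n)
      (Filter.map Complex.ofReal (nhdsWithin 1 (Set.Iio 1))) (nhds (G 1)) :=
    hGtendsto.congr' hEq.symm
  have hLG : L = G 1 := tendsto_nhds_unique hAbel hL2
  rw [hLG, hG1] at hS
  exact hS.congr (fun M => by rw [← hId M, hId M])


/-- For every `γ ∈ (0, 2π)`, the limit `lim_{M→∞} ∑_{m=1}^M (e^{imγ} - e^{-imγ})/m`
exists and equals `-2πi · Res_{z=0} [e^{iγz} / (z (e^{2πiz} - 1))]`. -/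
theorem statement3 (γ : ℝ) (hγ₀ : 0 < γ) (hγ₁ : γ < 2 * Real.pi) (R : ℂ)
    (hR : IsResidueAt (fun z : ℂ =>
      Complex.exp (Complex.I * γ * z) /
        (z * (Complex.exp (2 * Real.pi * Complex.I * z) - 1))) 0 R) :
    Tendsto (fun M : ℕ =>
        ∑ m ∈ Finset.Icc 1 M,
          (Complex.exp (Complex.I * (m : ℂ) * γ) -
            Complex.exp (-(Complex.I * (m : ℂ) * γ))) / (m : ℂ))
      atTop (nhds (-(2 * Real.pi * Complex.I) * R)) := by
  have hRv : R = ((γ:ℂ) - Real.pi) / (2 * Real.pi) := by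
    apply residue_value γ hγ₀ R
    have h : (fun z : ℂ => Complex.exp (Complex.I * γ * z) /
        (z * (Complex.exp (2 * Real.pi * Complex.I * z) - 1)))
        = (fun z : ℂ => Complex.exp (Complex.I * γ * z) /
        (z * (Complex.exp (2 * (Real.pi:ℂ) * Complex.I * z) - 1))) := by
      norm_num
    rw [h]
    exact hR
  have hval : -(2 * (Real.pi:ℂ) * Complex.I) * R = Complex.I * ((Real.pi:ℂ) - γ) := by
    rw [hRv]
    have hπ : ((Real.pi:ℝ):ℂ) ≠ 0 := by exact_mod_cast Real.pi_ne_zero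
    field_simp
    ring
  rw [hval]
  apply (sum_tendsto_aux γ hγ₀ hγ₁).congr
  intro M
  apply Finset.sum_congr rfl
  intro m _
  congr 1
  · congr 1
    · rw [← Complex.exp_nat_mul]
      congr 1
      ring
    · rw [← Complex.exp_nat_mul]
      congr 1
      ring
end

section
/- Fix an integer k ≥ 1 and a real number γ ∈ (0, 2π), and set h(z) = e^{iγz} / (z^k (e^{2πiz} − 1)). Then the integral of h over the horizontal segment {x + im : −(m+1/2) ≤ x ≤ m+1/2} (at height y = m) tends to 0 as the positive integer m tends to infinity. -/
open Complex Filter Finset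

/-- Let `k ≥ 1`, `γ ∈ (0, 2π)` and `h(z) = e^{iγz}/(z^k (e^{2πiz} - 1))`. The integral
of `h` over the horizontal segment `{x + im : -(m+1/2) ≤ x ≤ m+1/2}` at height `y = m`
tends to `0` as the positive integer `m` tends to infinity. -/
theorem statement6 (k : ℕ) (hk : 1 ≤ k)
    (γ : ℝ) (hγ₀ : 0 < γ) (hγ₁ : γ < 2 * Real.pi)
    (h : ℂ → ℂ)
    (hh : ∀ z : ℂ, h z = Complex.exp (Complex.I * γ * z) /
      (z ^ k * (Complex.exp (2 * Real.pi * Complex.I * z) - 1))) :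
    Tendsto (fun m : ℕ =>
        ∫ x in -((m : ℝ) + 1/2)..((m : ℝ) + 1/2), h ((x : ℂ) + Complex.I * (m : ℂ)))
      atTop (nhds 0) := by
  have hpi : (0:ℝ) < Real.pi := Real.pi_pos
  have hE : Real.exp (-(2*Real.pi)) < 1 := by
    rw [Real.exp_lt_one_iff]; linarith
  have hE0 : (0:ℝ) < 1 - Real.exp (-(2*Real.pi)) := by linarith
  set C : ℝ := 3 / (1 - Real.exp (-(2*Real.pi))) with hC
  have key : ∀ m : ℕ, 1 ≤ m →
      ‖∫ x in -((m : ℝ) + 1/2)..((m : ℝ) + 1/2), h ((x : ℂ) + Complex.I * (m : ℂ))‖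
        ≤ C * Real.exp (-(γ * m)) := by
    intro m hm
    have hm1 : (1:ℝ) ≤ m := by exact_mod_cast hm
    have hm0 : (0:ℝ) < m := by linarith
    have bnd : ∀ x ∈ Set.uIoc (-((m : ℝ) + 1/2)) ((m : ℝ) + 1/2),
        ‖h ((x : ℂ) + Complex.I * (m : ℂ))‖
          ≤ Real.exp (-(γ * m)) / (m * (1 - Real.exp (-(2*Real.pi)))) := by
      intro x _
      set z : ℂ := (x : ℂ) + Complex.I * (m : ℂ) with hz
      have him : z.im = m := by simp [hz]
      have habs : (m:ℝ) ≤ ‖z‖ := by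
        calc (m:ℝ) = |z.im| := by rw [him, _root_.abs_of_nonneg (by linarith : (0:ℝ) ≤ m)]
        _ ≤ ‖z‖ := Complex.abs_im_le_norm z
      have hnum : ‖Complex.exp (Complex.I * γ * z)‖ = Real.exp (-(γ * m)) := by
        rw [Complex.norm_exp]
        congr 1
        simp [hz, Complex.mul_re, Complex.mul_im]
      have hd1 : (m:ℝ) ≤ ‖z ^ k‖ := by
        rw [norm_pow]
        calc (m:ℝ) ≤ (m:ℝ) ^ k := le_self_pow₀ hm1 (by omega)
        _ ≤ ‖z‖ ^ k := pow_le_pow_left₀ (by linarith) habs k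
      have hre2 : ((2 * (Real.pi:ℂ) * Complex.I * z)).re = -(2 * Real.pi * m) := by
        simp [hz, Complex.mul_re, Complex.mul_im]
      have hd2 : 1 - Real.exp (-(2*Real.pi)) ≤
          ‖Complex.exp (2 * Real.pi * Complex.I * z) - 1‖ := by
        have h1 : ‖Complex.exp (2 * Real.pi * Complex.I * z)‖
            ≤ Real.exp (-(2*Real.pi)) := by
          rw [Complex.norm_exp, hre2]
          apply Real.exp_le_exp.2
          nlinarith
        have h2 : ‖(1:ℂ)‖ - ‖Complex.exp (2 * Real.pi * Complex.I * z)‖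
            ≤ ‖(1:ℂ) - Complex.exp (2 * Real.pi * Complex.I * z)‖ :=
          norm_sub_norm_le _ _
        rw [norm_sub_rev] at h2
        simp only [norm_one] at h2
        linarith
      rw [hh, norm_div, norm_mul]
      rw [hnum]
      have hden : (m:ℝ) * (1 - Real.exp (-(2*Real.pi))) ≤
          ‖z ^ k‖ * ‖Complex.exp (2 * Real.pi * Complex.I * z) - 1‖ :=
        mul_le_mul hd1 hd2 hE0.le (by positivity)
      exact div_le_div_of_nonneg_left (Real.exp_pos _).le (by positivity) hden
    have step := intervalIntegral.norm_integral_le_of_norm_le_const bnd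
    have hlen : |((m : ℝ) + 1/2) - (-((m : ℝ) + 1/2))| = 2 * m + 1 := by
      have he : ((m : ℝ) + 1/2) - (-((m : ℝ) + 1/2)) = 2 * m + 1 := by ring
      rw [he, _root_.abs_of_nonneg (by linarith)]
    rw [hlen] at step
    refine step.trans ?_
    have hCeq : C * Real.exp (-(γ * m)) = 3 * Real.exp (-(γ * m)) / (1 - Real.exp (-(2*Real.pi))) := by
      rw [hC]; ring
    rw [hCeq, div_mul_eq_mul_div, div_le_div_iff₀ (by positivity) hE0]
    have hep := Real.exp_pos (-(γ * m))
    nlinarith [mul_nonneg (mul_pos hep hE0).le (sub_nonneg.2 hm1)]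
  have hr : Real.exp (-γ) < 1 := by rw [Real.exp_lt_one_iff]; linarith
  have hg : Tendsto (fun m : ℕ => C * Real.exp (-(γ * m))) atTop (nhds 0) := by
    have : (fun m : ℕ => C * Real.exp (-(γ * m))) = fun m : ℕ => C * Real.exp (-γ) ^ m := by
      funext m
      rw [← Real.exp_nat_mul]
      ring_nf
    rw [this]
    have := (tendsto_pow_atTop_nhds_zero_of_lt_one (Real.exp_pos _).le hr).const_mul C
    simpa using this
  refine squeeze_zero_norm' ?_ hg
  filter_upwards [eventually_ge_atTop 1] with m hm using key m hm
end

section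
/- Fix an integer k ≥ 1 and a real number γ ∈ (0, 2π), and set h(z) = e^{iγz} / (z^k (e^{2πiz} − 1)). Then the integral of h over the horizontal segment {x − im : −(m+1/2) ≤ x ≤ m+1/2} (at height y = −m) tends to 0 as the positive integer m tends to infinity. -/
open Complex Filter Finset

/-- Let `k ≥ 1`, `γ ∈ (0, 2π)` and `h(z) = e^{iγz}/(z^k (e^{2πiz} - 1))`. The integral
of `h` over the horizontal segment `{x - im : -(m+1/2) ≤ x ≤ m+1/2}` at height `y = -m`
tends to `0` as the positive integer `m` tends to infinity. -/
theorem statement7 (k : ℕ) (hk : 1 ≤ k)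
    (γ : ℝ) (hγ₀ : 0 < γ) (hγ₁ : γ < 2 * Real.pi)
    (h : ℂ → ℂ)
    (hh : ∀ z : ℂ, h z = Complex.exp (Complex.I * γ * z) /
      (z ^ k * (Complex.exp (2 * Real.pi * Complex.I * z) - 1))) :
    Tendsto (fun m : ℕ =>
        ∫ x in -((m : ℝ) + 1/2)..((m : ℝ) + 1/2), h ((x : ℂ) - Complex.I * (m : ℂ)))
      atTop (nhds 0) := by
  have hπ := Real.pi_pos
  refine squeeze_zero_norm' (a := fun m : ℕ => 6 * Real.exp ((γ - 2*Real.pi) * m)) ?_ ?_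
  · filter_upwards [eventually_ge_atTop 1] with m hm
    have hm1 : (1:ℝ) ≤ (m:ℝ) := by exact_mod_cast hm
    have hE2 : (2:ℝ) ≤ Real.exp (2*Real.pi*m) := by
      have h1 : (1:ℝ) ≤ 2*Real.pi*m := by
        nlinarith [Real.pi_gt_three, mul_le_mul_of_nonneg_left hm1 Real.pi_pos.le]
      have h2 := Real.add_one_le_exp (1:ℝ)
      have := Real.exp_le_exp.mpr h1
      linarith
    have hden : 0 < (m:ℝ) * (Real.exp (2*Real.pi*m) - 1) := by nlinarith
    have key : ∀ x ∈ Set.uIoc (-((m:ℝ)+1/2)) ((m:ℝ)+1/2),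
        ‖h ((x:ℂ) - Complex.I * m)‖ ≤
          Real.exp (γ*m) / ((m:ℝ) * (Real.exp (2*Real.pi*m) - 1)) := by
      intro x hx
      rw [hh, norm_div, norm_mul, norm_pow]
      have h1 : ‖Complex.exp (Complex.I * γ * ((x:ℂ) - Complex.I*m))‖ = Real.exp (γ*m) := by
        rw [Complex.norm_exp]
        congr 1
        simp [Complex.mul_re, Complex.mul_im]
      have h2 : (m:ℝ) ≤ ‖(x:ℂ) - Complex.I*m‖ := by
        have h3 := Complex.abs_im_le_norm ((x:ℂ) - Complex.I*m)
        simp only [Complex.sub_im, Complex.ofReal_im, Complex.mul_im, Complex.I_re,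
          Complex.I_im, Complex.ofReal_re, Complex.natCast_im, Complex.natCast_re] at h3
        rw [abs_of_nonpos (by simp)] at h3
        linarith [h3]
      have h2' : (m:ℝ) ≤ ‖(x:ℂ) - Complex.I*m‖ ^ k := by
        calc (m:ℝ) ≤ (m:ℝ)^k := le_self_pow₀ hm1 (by omega)
          _ ≤ _ := pow_le_pow_left₀ (by positivity) h2 k
      have h3 : Real.exp (2*Real.pi*m) - 1 ≤
          ‖Complex.exp (2*Real.pi*Complex.I*((x:ℂ) - Complex.I*m)) - 1‖ := by
        have h4 : ‖Complex.exp (2*Real.pi*Complex.I*((x:ℂ) - Complex.I*m))‖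
            = Real.exp (2*Real.pi*m) := by
          rw [Complex.norm_exp]
          congr 1
          simp [Complex.mul_re, Complex.mul_im]
        calc Real.exp (2*Real.pi*m) - 1 = ‖Complex.exp (2*Real.pi*Complex.I*((x:ℂ) - Complex.I*m))‖ - ‖(1:ℂ)‖ := by
              rw [h4]; simp
          _ ≤ _ := norm_sub_norm_le _ _
      rw [h1]
      have hnum : (m:ℝ) * (Real.exp (2*Real.pi*m) - 1)
          ≤ ‖(x:ℂ) - Complex.I*m‖^k * ‖Complex.exp (2*Real.pi*Complex.I*((x:ℂ) - Complex.I*m)) - 1‖ := by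
        have hm0 : (0:ℝ) ≤ (m:ℝ) := by positivity
        have he1 : (0:ℝ) ≤ Real.exp (2*Real.pi*m) - 1 := by linarith
        exact mul_le_mul h2' h3 he1 (by positivity)
      exact div_le_div_of_nonneg_left (Real.exp_pos _).le hden hnum
    have hInt := intervalIntegral.norm_integral_le_of_norm_le_const key
    have habs : |((m:ℝ)+1/2) - (-((m:ℝ)+1/2))| = 2*m+1 := by
      rw [_root_.abs_of_nonneg (by linarith)]; ring
    rw [habs] at hInt
    refine hInt.trans ?_
    have hEsub : Real.exp ((γ - 2*Real.pi)*m) = Real.exp (γ*m) / Real.exp (2*Real.pi*m) := by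
      rw [← Real.exp_sub]; ring_nf
    rw [hEsub, div_mul_eq_mul_div, ← mul_div_assoc, div_le_div_iff₀ hden (Real.exp_pos _)]
    have ha := Real.exp_pos (γ*m)
    have hsc : (2*(m:ℝ)+1)*Real.exp (2*Real.pi*m) ≤ 6*m*(Real.exp (2*Real.pi*m)-1) := by
      nlinarith [mul_nonneg (sub_nonneg.2 hm1) (sub_nonneg.2 hE2)]
    nlinarith [mul_le_mul_of_nonneg_left hsc ha.le]
  · have h1 : Tendsto (fun m : ℕ => (γ - 2*Real.pi) * m) atTop atBot := by
      apply Tendsto.const_mul_atTop_of_neg (by linarith)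
      exact tendsto_natCast_atTop_atTop
    have h2 : Tendsto (fun m : ℕ => Real.exp ((γ - 2*Real.pi) * m)) atTop (nhds 0) :=
      Real.tendsto_exp_atBot.comp h1
    simpa using h2.const_mul 6
end

section
/- Fix an integer k ≥ 1 and a real number γ ∈ (0, 2π), and set h(z) = e^{iγz} / (z^k (e^{2πiz} − 1)). Then the integral of h over the vertical segment {(m+1/2) + iy : −m ≤ y ≤ m} tends to 0 as the positive integer m tends to infinity. -/
open Complex Filter Finset

private lemma expInt (c a b : ℝ) (hc : c ≠ 0) :
    ∫ y in a..b, Real.exp (c * y) = (Real.exp (c * b) - Real.exp (c * a)) / c := by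
  rw [intervalIntegral.integral_comp_mul_left Real.exp hc, integral_exp, smul_eq_mul]
  ring

/-- Let `k ≥ 1`, `γ ∈ (0, 2π)` and `h(z) = e^{iγz}/(z^k (e^{2πiz} - 1))`. The complex
line integral of `h` over the vertical segment `{(m+1/2) + iy : -m ≤ y ≤ m}` tends to
`0` as the positive integer `m` tends to infinity. -/
theorem statement8 (k : ℕ) (hk : 1 ≤ k)
    (γ : ℝ) (hγ₀ : 0 < γ) (hγ₁ : γ < 2 * Real.pi)
    (h : ℂ → ℂ)
    (hh : ∀ z : ℂ, h z = Complex.exp (Complex.I * γ * z) /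
      (z ^ k * (Complex.exp (2 * Real.pi * Complex.I * z) - 1))) :
    Tendsto (fun m : ℕ =>
        Complex.I * ∫ y in -(m : ℝ)..(m : ℝ),
          h ((((m : ℝ) + 1/2 : ℝ) : ℂ) + Complex.I * (y : ℂ)))
      atTop (nhds 0) := by
  have hπγ : 0 < 2 * Real.pi - γ := by linarith
  set C : ℝ := 1 / γ + 1 / (2 * Real.pi - γ) with hC
  apply squeeze_zero_norm' (a := fun m : ℕ => C / ((m : ℝ) + 1/2))
  · filter_upwards [eventually_ge_atTop 1] with m hm
    set M : ℝ := (m : ℝ) with hMdef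
    have hM1 : (1 : ℝ) ≤ M := by simp only [hMdef]; exact_mod_cast hm
    set c : ℝ := M + 1/2 with hcdef
    have hc1 : (1 : ℝ) ≤ c := by simp only [hcdef]; linarith
    have hc0 : (0 : ℝ) < c := by linarith
    -- the dominating function
    set g : ℝ → ℝ := fun y =>
      min (Real.exp (-γ * y) / c) (Real.exp ((2 * Real.pi - γ) * y) / c) with hgdef
    have hgcont : Continuous g := by
      apply Continuous.min <;> exact (Real.continuous_exp.comp (by continuity)).div_const c
    -- pointwise bound
    have hb : ∀ y : ℝ, ‖h (((c : ℝ) : ℂ) + Complex.I * (y : ℂ))‖ ≤ g y := by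
      intro y
      set z : ℂ := ((c : ℝ) : ℂ) + Complex.I * (y : ℂ) with hzdef
      set E : ℝ := Real.exp (-(2 * Real.pi * y)) with hEdef
      have hE0 : 0 < E := Real.exp_pos _
      have hnum : ‖Complex.exp (Complex.I * γ * z)‖ = Real.exp (-(γ * y)) := by
        rw [Complex.norm_exp]
        congr 1
        simp [hzdef, Complex.mul_re, Complex.mul_im]
      have hexp2 : Complex.exp (2 * Real.pi * Complex.I * z) = -(E : ℂ) := by
        have harg : (2 * Real.pi * Complex.I * z)
            = (m : ℤ) * (2 * (Real.pi : ℂ) * Complex.I) + Real.pi * Complex.I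
              + ((-(2 * Real.pi * y) : ℝ) : ℂ) := by
          simp only [hzdef, hcdef, hMdef]
          push_cast
          ring_nf
          rw [Complex.I_sq]
          ring
        rw [harg, Complex.exp_add, Complex.exp_add, Complex.exp_int_mul_two_pi_mul_I,
          Complex.exp_pi_mul_I, ← Complex.ofReal_exp, ← hEdef]
        ring
      have hden2 : ‖Complex.exp (2 * Real.pi * Complex.I * z) - 1‖ = E + 1 := by
        rw [hexp2]
        have : -(E : ℂ) - 1 = -(((E + 1 : ℝ)) : ℂ) := by push_cast; ring
        rw [this, norm_neg, Complex.norm_real, Real.norm_eq_abs, abs_of_pos (by linarith)]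
      have hzabs : c ≤ ‖z‖ := by
        have : z.re = c := by simp [hzdef]
        calc c = z.re := this.symm
          _ ≤ |z.re| := le_abs_self _
          _ ≤ ‖z‖ := Complex.abs_re_le_norm z
      have hck : c ≤ ‖z‖ ^ k :=
        le_trans (le_self_pow₀ hc1 (by omega)) (pow_le_pow_left₀ hc0.le hzabs k)
      have hnorm : ‖h z‖ = Real.exp (-(γ * y)) / (‖z‖ ^ k * (E + 1)) := by
        rw [hh z, norm_div, norm_mul, hnum, hden2, norm_pow]
      have b1 : ‖h z‖ ≤ Real.exp (-γ * y) / c := by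
        rw [hnorm]
        have hd : c ≤ ‖z‖ ^ k * (E + 1) := by
          calc c = c * 1 := (mul_one c).symm
            _ ≤ ‖z‖ ^ k * (E + 1) := by
                apply mul_le_mul hck (by linarith) (by norm_num) (by positivity)
        rw [neg_mul]
        exact div_le_div_of_nonneg_left (Real.exp_pos _).le hc0 hd
      have b2 : ‖h z‖ ≤ Real.exp ((2 * Real.pi - γ) * y) / c := by
        rw [hnorm]
        have hd : c * E ≤ ‖z‖ ^ k * (E + 1) :=
          mul_le_mul hck (by linarith) hE0.le (by positivity)
        have step : Real.exp (-(γ * y)) / (‖z‖ ^ k * (E + 1))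
            ≤ Real.exp (-(γ * y)) / (c * E) :=
          div_le_div_of_nonneg_left (Real.exp_pos _).le (by positivity) hd
        refine step.trans (le_of_eq ?_)
        rw [hEdef, div_mul_eq_div_div_swap, ← Real.exp_sub]
        congr 2
        ring
      exact le_min b1 b2
    -- now the integral estimate
    have hgint : ∀ a b : ℝ, IntervalIntegrable g MeasureTheory.volume a b :=
      fun a b => hgcont.intervalIntegrable a b
    have e2cont : Continuous fun y : ℝ => Real.exp ((2 * Real.pi - γ) * y) / c :=
      (Real.continuous_exp.comp (by continuity)).div_const c
    have e1cont : Continuous fun y : ℝ => Real.exp (-γ * y) / c :=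
      (Real.continuous_exp.comp (by continuity)).div_const c
    have key : ‖∫ y in -M..M, h (((c : ℝ) : ℂ) + Complex.I * (y : ℂ))‖ ≤ C / c := by
      have h1 : ‖∫ y in -M..M, h (((c : ℝ) : ℂ) + Complex.I * (y : ℂ))‖
          ≤ |∫ y in -M..M, g y| := by
        apply intervalIntegral.norm_integral_le_abs_of_norm_le _ (hgint _ _)
        filter_upwards with t using hb t
      have hsplit : (∫ y in -M..M, g y) = (∫ y in -M..0, g y) + ∫ y in (0:ℝ)..M, g y :=
        (intervalIntegral.integral_add_adjacent_intervals (hgint _ _) (hgint _ _)).symm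
      have hleft : (∫ y in -M..0, g y) ≤ ∫ y in -M..0, Real.exp ((2 * Real.pi - γ) * y) / c := by
        apply intervalIntegral.integral_mono_on (by linarith) (hgint _ _)
          (e2cont.intervalIntegrable _ _)
        intro y _
        exact min_le_right _ _
      have hright : (∫ y in (0:ℝ)..M, g y) ≤ ∫ y in (0:ℝ)..M, Real.exp (-γ * y) / c := by
        apply intervalIntegral.integral_mono_on (by linarith) (hgint _ _)
          (e1cont.intervalIntegrable _ _)
        intro y _
        exact min_le_left _ _
      have hleftval : (∫ y in -M..0, Real.exp ((2 * Real.pi - γ) * y) / c)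
          ≤ (1 / (2 * Real.pi - γ)) / c := by
        rw [intervalIntegral.integral_div, expInt _ _ _ (ne_of_gt hπγ), mul_zero,
          Real.exp_zero]
        have h1 : 0 < Real.exp ((2 * Real.pi - γ) * -M) := Real.exp_pos _
        gcongr
        linarith
      have hrightval : (∫ y in (0:ℝ)..M, Real.exp (-γ * y) / c) ≤ (1 / γ) / c := by
        rw [intervalIntegral.integral_div, expInt _ _ _ (by linarith : -γ ≠ 0), mul_zero,
          Real.exp_zero]
        have heq : (Real.exp (-γ * M) - 1) / (-γ) = (1 - Real.exp (-γ * M)) / γ := by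
          rw [div_neg, ← neg_div]
          ring_nf
        rw [heq]
        have h1 : 0 < Real.exp (-γ * M) := Real.exp_pos _
        gcongr
        linarith
      have hgnn : (0:ℝ) ≤ ∫ y in -M..M, g y := by
        apply intervalIntegral.integral_nonneg (by linarith)
        intro y _
        exact le_min (by positivity) (by positivity)
      calc ‖∫ y in -M..M, h (((c : ℝ) : ℂ) + Complex.I * (y : ℂ))‖
          ≤ |∫ y in -M..M, g y| := h1
        _ = ∫ y in -M..M, g y := abs_of_nonneg hgnn
        _ = (∫ y in -M..0, g y) + ∫ y in (0:ℝ)..M, g y := hsplit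
        _ ≤ (1 / (2 * Real.pi - γ)) / c + (1 / γ) / c := by
            gcongr
            · exact hleft.trans hleftval
            · exact hright.trans hrightval
        _ = C / c := by rw [hC]; ring
    rw [norm_mul, Complex.norm_I, one_mul]
    exact key
  · apply Tendsto.div_atTop (tendsto_const_nhds)
    exact tendsto_atTop_add_const_right _ _ tendsto_natCast_atTop_atTop
end

section
/- Fix an integer k ≥ 1 and a real number γ ∈ (0, 2π), and set h(z) = e^{iγz} / (z^k (e^{2πiz} − 1)). Then the integral of h over the positively oriented boundary of the rectangle with vertices −(m+1/2) − im, (m+1/2) − im, (m+1/2) + im, −(m+1/2) + im tends to 0 as the positive integer m tends to infinity. -/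
open Complex Filter Finset

private lemma aux_decay {b : ℝ} (hb : 0 < b) :
    Tendsto (fun m : ℕ => (m:ℝ) * Real.exp (-(b * m))) atTop (nhds 0) := by
  have h1 : Tendsto (fun x : ℝ => x ^ 1 * Real.exp (-x)) atTop (nhds 0) :=
    Real.tendsto_pow_mul_exp_neg_atTop_nhds_zero 1
  have h2 : Tendsto (fun m : ℕ => b * (m:ℝ)) atTop atTop :=
    (tendsto_natCast_atTop_atTop).const_mul_atTop hb
  have h4 := (h1.comp h2).const_mul (1/b)
  rw [mul_zero] at h4
  refine h4.congr fun m => ?_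
  simp only [Function.comp, pow_one]
  field_simp

/-- Let `k ≥ 1`, `γ ∈ (0, 2π)` and `h(z) = e^{iγz}/(z^k (e^{2πiz} - 1))`. The integral
of `h` over the positively oriented boundary of the rectangle with vertices
`±(m+1/2) ± im` (bottom side left-to-right, right side upwards, top side right-to-left,
left side downwards) tends to `0` as the positive integer `m` tends to infinity. -/
theorem statement10 (k : ℕ) (hk : 1 ≤ k)
    (γ : ℝ) (hγ₀ : 0 < γ) (hγ₁ : γ < 2 * Real.pi)
    (h : ℂ → ℂ)
    (hh : ∀ z : ℂ, h z = Complex.exp (Complex.I * γ * z) /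
      (z ^ k * (Complex.exp (2 * Real.pi * Complex.I * z) - 1))) :
    Tendsto (fun m : ℕ =>
        (∫ x in -((m : ℝ) + 1/2)..((m : ℝ) + 1/2), h ((x : ℂ) - Complex.I * (m : ℂ)))
        + Complex.I * (∫ y in -(m : ℝ)..(m : ℝ),
            h ((((m : ℝ) + 1/2 : ℝ) : ℂ) + Complex.I * (y : ℂ)))
        - (∫ x in -((m : ℝ) + 1/2)..((m : ℝ) + 1/2), h ((x : ℂ) + Complex.I * (m : ℂ)))
        - Complex.I * ∫ y in -(m : ℝ)..(m : ℝ),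
            h (-(((m : ℝ) + 1/2 : ℝ) : ℂ) + Complex.I * (y : ℂ)))
      atTop (nhds 0) := by
  have hπ : (0:ℝ) < Real.pi := Real.pi_pos
  set δ : ℝ := 2 * Real.pi - γ with hδdef
  have hδ : 0 < δ := by rw [hδdef]; linarith
  -- norm formula for h
  have hnorm : ∀ z : ℂ, ‖h z‖
      = Real.exp (-(γ * z.im)) / (‖z‖ ^ k * ‖Complex.exp (2 * Real.pi * Complex.I * z) - 1‖) := by
    intro z
    rw [hh z, norm_div, norm_mul, norm_pow]
    congr 2
    rw [Complex.norm_exp]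
    congr 1
    simp [Complex.mul_re, Complex.mul_im]
  set gfun : ℝ → ℝ := fun y => Real.exp (-(γ * y)) / (Real.exp (-(2 * Real.pi * y)) + 1)
    with hgfun
  have hgcont : Continuous gfun := by
    refine Continuous.div (by fun_prop) (by fun_prop) fun y => by positivity
  -- side estimate
  have side : ∀ m : ℕ, 1 ≤ m → ∀ c : ℝ, (m:ℝ) ≤ |c| →
      Complex.exp (2 * Real.pi * Complex.I * (c:ℂ)) = -1 →
      ‖∫ y in -(m:ℝ)..(m:ℝ), h ((c:ℂ) + Complex.I * (y:ℂ))‖ ≤ (1/δ + 1/γ) / (m:ℝ) := by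
    intro m hm c hc hec
    have hM : (1:ℝ) ≤ (m:ℝ) := by exact_mod_cast hm
    have hMpos : (0:ℝ) < (m:ℝ) := by linarith
    have hmk : (m:ℝ) ≤ (m:ℝ)^k := le_self_pow₀ hM (by omega)
    have hmkpos : (0:ℝ) < (m:ℝ)^k := pow_pos hMpos k
    have hEv : ∀ y : ℝ, Complex.exp (2 * Real.pi * Complex.I * ((c:ℂ) + Complex.I * (y:ℂ)))
        = -((Real.exp (-(2 * Real.pi * y)) : ℝ) : ℂ) := by
      intro y
      rw [show (2 * (Real.pi:ℂ) * Complex.I * ((c:ℂ) + Complex.I * (y:ℂ)))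
          = 2 * Real.pi * Complex.I * (c:ℂ) + ((-(2 * Real.pi * y) : ℝ) : ℂ) by
        push_cast; ring_nf; rw [Complex.I_sq]; ring]
      rw [Complex.exp_add, hec, Complex.ofReal_exp]
      ring
    have hpt : ∀ y : ℝ, ‖h ((c:ℂ) + Complex.I * (y:ℂ))‖ ≤ gfun y / (m:ℝ)^k := by
      intro y
      rw [hnorm]
      have him : ((c:ℂ) + Complex.I * (y:ℂ)).im = y := by simp
      have hre : ((c:ℂ) + Complex.I * (y:ℂ)).re = c := by simp
      have hEn : ‖Complex.exp (2 * Real.pi * Complex.I * ((c:ℂ) + Complex.I * (y:ℂ))) - 1‖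
          = Real.exp (-(2 * Real.pi * y)) + 1 := by
        rw [show Complex.exp (2 * Real.pi * Complex.I * ((c:ℂ) + Complex.I * (y:ℂ))) - 1
            = -(((Real.exp (-(2 * Real.pi * y)) + 1 : ℝ) : ℂ)) by rw [hEv y]; push_cast; ring]
        rw [norm_neg, Complex.norm_real, Real.norm_eq_abs]
        exact _root_.abs_of_pos (by positivity)
      rw [him, hEn]
      have hz : (m:ℝ) ≤ ‖(c:ℂ) + Complex.I * (y:ℂ)‖ := by
        calc (m:ℝ) ≤ |c| := hc
        _ = |((c:ℂ) + Complex.I * (y:ℂ)).re| := by rw [hre]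
        _ ≤ ‖(c:ℂ) + Complex.I * (y:ℂ)‖ := by
            exact Complex.abs_re_le_norm _
      have hrhs : gfun y / (m:ℝ)^k
          = Real.exp (-(γ * y)) / ((m:ℝ)^k * (Real.exp (-(2 * Real.pi * y)) + 1)) := by
        show Real.exp (-(γ * y)) / (Real.exp (-(2 * Real.pi * y)) + 1) / (m:ℝ)^k = _
        rw [div_div, mul_comm (Real.exp (-(2 * Real.pi * y)) + 1) ((m:ℝ)^k)]
      rw [hrhs]
      refine div_le_div₀ (Real.exp_pos _).le le_rfl
        (mul_pos hmkpos (by positivity)) ?_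
      exact mul_le_mul (pow_le_pow_left₀ (by positivity) hz k) le_rfl (by positivity)
        (by positivity)
    have hB : ‖∫ y in -(m:ℝ)..(m:ℝ), h ((c:ℂ) + Complex.I * (y:ℂ))‖
        ≤ |∫ y in -(m:ℝ)..(m:ℝ), gfun y / (m:ℝ)^k| :=
      intervalIntegral.norm_integral_le_abs_of_norm_le (Filter.Eventually.of_forall fun y => hpt y)
        ((hgcont.div_const _).intervalIntegrable _ _)
    rw [intervalIntegral.integral_div] at hB
    have hint : ∀ a b : ℝ, IntervalIntegrable gfun MeasureTheory.volume a b :=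
      fun a b => hgcont.intervalIntegrable a b
    have hg0 : ∀ y : ℝ, 0 ≤ gfun y := fun y => by
      show 0 ≤ Real.exp (-(γ * y)) / (Real.exp (-(2 * Real.pi * y)) + 1)
      positivity
    have h1 : ∫ y in -(m:ℝ)..(0:ℝ), gfun y ≤ 1/δ := by
      have hgint : IntervalIntegrable (fun y : ℝ => Real.exp (δ * y))
          MeasureTheory.volume (-(m:ℝ)) 0 := Continuous.intervalIntegrable (by fun_prop) _ _
      have hmono : ∫ y in -(m:ℝ)..(0:ℝ), gfun y ≤ ∫ y in -(m:ℝ)..(0:ℝ), Real.exp (δ * y) := by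
        apply intervalIntegral.integral_mono_on (by linarith) (hint _ _) hgint
        intro y _
        show Real.exp (-(γ * y)) / (Real.exp (-(2 * Real.pi * y)) + 1) ≤ Real.exp (δ * y)
        have he : Real.exp (δ * y) = Real.exp (-(γ*y)) / Real.exp (-(2*Real.pi*y)) := by
          rw [← Real.exp_sub]; congr 1; rw [hδdef]; ring
        rw [he]
        refine div_le_div₀ (Real.exp_pos _).le le_rfl (Real.exp_pos _) ?_
        linarith
      have hcomp : ∫ y in -(m:ℝ)..(0:ℝ), Real.exp (δ * y)
          = δ⁻¹ * (1 - Real.exp (δ * -(m:ℝ))) := by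
        rw [intervalIntegral.integral_comp_mul_left Real.exp hδ.ne',
          _root_.integral_exp, mul_zero, Real.exp_zero, smul_eq_mul]
      refine hmono.trans ?_
      rw [hcomp, one_div]
      have ha := Real.exp_pos (δ * -(m:ℝ))
      have hb : (0:ℝ) < δ⁻¹ := by positivity
      nlinarith
    have h2 : ∫ y in (0:ℝ)..(m:ℝ), gfun y ≤ 1/γ := by
      have hgint : IntervalIntegrable (fun y : ℝ => Real.exp (-γ * y))
          MeasureTheory.volume 0 (m:ℝ) := Continuous.intervalIntegrable (by fun_prop) _ _
      have hmono : ∫ y in (0:ℝ)..(m:ℝ), gfun y ≤ ∫ y in (0:ℝ)..(m:ℝ), Real.exp (-γ * y) := by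
        apply intervalIntegral.integral_mono_on (by linarith) (hint _ _) hgint
        intro y _
        show Real.exp (-(γ * y)) / (Real.exp (-(2 * Real.pi * y)) + 1) ≤ Real.exp (-γ * y)
        have he : Real.exp (-γ * y) = Real.exp (-(γ*y)) / 1 := by rw [div_one]; congr 1; ring
        rw [he]
        refine div_le_div₀ (Real.exp_pos _).le le_rfl one_pos ?_
        linarith [Real.exp_pos (-(2*Real.pi*y))]
      have hcomp : ∫ y in (0:ℝ)..(m:ℝ), Real.exp (-γ * y)
          = (-γ)⁻¹ * (Real.exp (-γ * (m:ℝ)) - 1) := by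
        rw [intervalIntegral.integral_comp_mul_left Real.exp (by linarith : -γ ≠ 0),
          _root_.integral_exp, mul_zero, Real.exp_zero, smul_eq_mul]
      refine hmono.trans ?_
      rw [hcomp, one_div]
      have ha := Real.exp_pos (-γ * (m:ℝ))
      have hb : (0:ℝ) < γ⁻¹ := by positivity
      have hcd : (-γ)⁻¹ = -(γ⁻¹) := by field_simp
      nlinarith
    have hsplit : ∫ y in -(m:ℝ)..(m:ℝ), gfun y
        = (∫ y in -(m:ℝ)..(0:ℝ), gfun y) + ∫ y in (0:ℝ)..(m:ℝ), gfun y :=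
      (intervalIntegral.integral_add_adjacent_intervals (hint _ _) (hint _ _)).symm
    have hnonneg : 0 ≤ ∫ y in -(m:ℝ)..(m:ℝ), gfun y :=
      intervalIntegral.integral_nonneg (by linarith) (fun y _ => hg0 y)
    refine hB.trans ?_
    rw [abs_div, _root_.abs_of_nonneg hnonneg, _root_.abs_of_pos hmkpos]
    have hle : ∫ y in -(m:ℝ)..(m:ℝ), gfun y ≤ 1/δ + 1/γ := by
      rw [hsplit]; linarith
    exact div_le_div₀ (by positivity) hle hMpos hmk
  -- horizontal estimates
  have hE2 : ∀ m : ℕ, 1 ≤ m → (2:ℝ) ≤ Real.exp (2*Real.pi*(m:ℝ)) := by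
    intro m hm
    have hM : (1:ℝ) ≤ (m:ℝ) := by exact_mod_cast hm
    have := Real.add_one_le_exp (2*Real.pi*(m:ℝ))
    nlinarith [Real.pi_gt_three]
  have bot : ∀ m : ℕ, 1 ≤ m →
      ‖∫ x in -((m:ℝ)+1/2)..((m:ℝ)+1/2), h ((x:ℂ) - Complex.I * (m:ℂ))‖
        ≤ 6 * ((m:ℝ) * Real.exp (-(δ * (m:ℝ)))) := by
    intro m hm
    have hM : (1:ℝ) ≤ (m:ℝ) := by exact_mod_cast hm
    have hMpos : (0:ℝ) < (m:ℝ) := by linarith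
    have h1k : (1:ℝ) ≤ (m:ℝ)^k := one_le_pow₀ hM
    have hE2m := hE2 m hm
    set C := Real.exp (γ * (m:ℝ)) / ((m:ℝ)^k * (Real.exp (2*Real.pi*(m:ℝ)) - 1)) with hC
    have hpt : ∀ x ∈ Set.uIoc (-((m:ℝ)+1/2)) ((m:ℝ)+1/2),
        ‖h ((x:ℂ) - Complex.I * (m:ℂ))‖ ≤ C := by
      intro x _
      rw [hnorm]
      have him : ((x:ℂ) - Complex.I * (m:ℂ)).im = -(m:ℝ) := by simp
      rw [him, show -(γ * -(m:ℝ)) = γ * (m:ℝ) by ring]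
      have hz : (m:ℝ) ≤ ‖(x:ℂ) - Complex.I*(m:ℂ)‖ := by
        calc (m:ℝ) = |(-(m:ℝ))| := by rw [abs_neg, _root_.abs_of_nonneg (by positivity)]
        _ = |((x:ℂ) - Complex.I*(m:ℂ)).im| := by rw [him]
        _ ≤ ‖(x:ℂ) - Complex.I*(m:ℂ)‖ := by
            exact Complex.abs_im_le_norm _
      have h1 : ‖Complex.exp (2*Real.pi*Complex.I*((x:ℂ) - Complex.I*(m:ℂ)))‖
          = Real.exp (2*Real.pi*(m:ℝ)) := by
        rw [Complex.norm_exp]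
        congr 1
        simp [Complex.mul_re, Complex.mul_im]
      have hEnorm : Real.exp (2*Real.pi*(m:ℝ)) - 1
          ≤ ‖Complex.exp (2*Real.pi*Complex.I*((x:ℂ) - Complex.I*(m:ℂ))) - 1‖ := by
        calc Real.exp (2*Real.pi*(m:ℝ)) - 1
            = ‖Complex.exp (2*Real.pi*Complex.I*((x:ℂ) - Complex.I*(m:ℂ)))‖ - ‖(1:ℂ)‖ := by
              rw [h1, norm_one]
        _ ≤ _ := norm_sub_norm_le _ _
      rw [hC]
      refine div_le_div₀ (Real.exp_pos _).le le_rfl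
        (mul_pos (pow_pos hMpos k) (by linarith)) ?_
      exact mul_le_mul (pow_le_pow_left₀ (by positivity) hz k) hEnorm (by linarith)
        (by positivity)
    have hIb := intervalIntegral.norm_integral_le_of_norm_le_const hpt
    rw [show ((m:ℝ)+1/2) - (-((m:ℝ)+1/2)) = 2*(m:ℝ)+1 by ring,
      _root_.abs_of_pos (by linarith : (0:ℝ) < 2*(m:ℝ)+1)] at hIb
    refine hIb.trans ?_
    have hexp : Real.exp (γ * (m:ℝ))
        = Real.exp (-(δ*(m:ℝ))) * Real.exp (2*Real.pi*(m:ℝ)) := by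
      rw [← Real.exp_add]; congr 1; rw [hδdef]; ring
    have hEne : Real.exp (2*Real.pi*(m:ℝ)) ≠ 0 := (Real.exp_pos _).ne'
    calc C * (2*(m:ℝ)+1)
        ≤ (Real.exp (γ*(m:ℝ)) / (1 * (Real.exp (2*Real.pi*(m:ℝ))/2))) * (3*(m:ℝ)) := by
          rw [hC]
          refine mul_le_mul ?_ (by linarith) (by linarith) (by positivity)
          refine div_le_div₀ (Real.exp_pos _).le le_rfl (by positivity) ?_
          refine mul_le_mul h1k (by linarith) (by positivity) (le_trans zero_le_one h1k)
    _ = 6 * ((m:ℝ) * Real.exp (-(δ * (m:ℝ)))) := by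
          rw [hexp]; field_simp; ring
  have top : ∀ m : ℕ, 1 ≤ m →
      ‖∫ x in -((m:ℝ)+1/2)..((m:ℝ)+1/2), h ((x:ℂ) + Complex.I * (m:ℂ))‖
        ≤ 6 * ((m:ℝ) * Real.exp (-(γ * (m:ℝ)))) := by
    intro m hm
    have hM : (1:ℝ) ≤ (m:ℝ) := by exact_mod_cast hm
    have hMpos : (0:ℝ) < (m:ℝ) := by linarith
    have h1k : (1:ℝ) ≤ (m:ℝ)^k := one_le_pow₀ hM
    have hE2m := hE2 m hm
    have hEneg : Real.exp (-(2*Real.pi*(m:ℝ))) ≤ 1/2 := by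
      have h1 : Real.exp (-(2*Real.pi*(m:ℝ))) * Real.exp (2*Real.pi*(m:ℝ)) = 1 := by
        rw [← Real.exp_add]; simp
      nlinarith [Real.exp_pos (-(2*Real.pi*(m:ℝ)))]
    set C := Real.exp (-(γ * (m:ℝ))) / ((m:ℝ)^k * (1/2)) with hC
    have hpt : ∀ x ∈ Set.uIoc (-((m:ℝ)+1/2)) ((m:ℝ)+1/2),
        ‖h ((x:ℂ) + Complex.I * (m:ℂ))‖ ≤ C := by
      intro x _
      rw [hnorm]
      have him : ((x:ℂ) + Complex.I * (m:ℂ)).im = (m:ℝ) := by simp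
      rw [him]
      have hz : (m:ℝ) ≤ ‖(x:ℂ) + Complex.I*(m:ℂ)‖ := by
        calc (m:ℝ) = |(m:ℝ)| := (_root_.abs_of_nonneg (by positivity)).symm
        _ = |((x:ℂ) + Complex.I*(m:ℂ)).im| := by rw [him]
        _ ≤ ‖(x:ℂ) + Complex.I*(m:ℂ)‖ := by
            exact Complex.abs_im_le_norm _
      have h1 : ‖Complex.exp (2*Real.pi*Complex.I*((x:ℂ) + Complex.I*(m:ℂ)))‖
          = Real.exp (-(2*Real.pi*(m:ℝ))) := by
        rw [Complex.norm_exp]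
        congr 1
        simp [Complex.mul_re, Complex.mul_im]
      have hEnorm : (1:ℝ)/2
          ≤ ‖Complex.exp (2*Real.pi*Complex.I*((x:ℂ) + Complex.I*(m:ℂ))) - 1‖ := by
        calc (1:ℝ)/2 ≤ 1 - Real.exp (-(2*Real.pi*(m:ℝ))) := by linarith
        _ = ‖(1:ℂ)‖ - ‖Complex.exp (2*Real.pi*Complex.I*((x:ℂ) + Complex.I*(m:ℂ)))‖ := by
              rw [h1, norm_one]
        _ ≤ ‖(1:ℂ) - Complex.exp (2*Real.pi*Complex.I*((x:ℂ) + Complex.I*(m:ℂ)))‖ :=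
              norm_sub_norm_le _ _
        _ = _ := norm_sub_rev _ _
      rw [hC]
      refine div_le_div₀ (Real.exp_pos _).le le_rfl
        (mul_pos (pow_pos hMpos k) (by norm_num)) ?_
      exact mul_le_mul (pow_le_pow_left₀ (by positivity) hz k) hEnorm (by norm_num)
        (by positivity)
    have hIb := intervalIntegral.norm_integral_le_of_norm_le_const hpt
    rw [show ((m:ℝ)+1/2) - (-((m:ℝ)+1/2)) = 2*(m:ℝ)+1 by ring,
      _root_.abs_of_pos (by linarith : (0:ℝ) < 2*(m:ℝ)+1)] at hIb
    refine hIb.trans ?_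
    calc C * (2*(m:ℝ)+1)
        ≤ (Real.exp (-(γ*(m:ℝ))) / (1 * (1/2))) * (3*(m:ℝ)) := by
          rw [hC]
          refine mul_le_mul ?_ (by linarith) (by linarith) (by positivity)
          refine div_le_div₀ (Real.exp_pos _).le le_rfl (by norm_num) ?_
          refine mul_le_mul h1k le_rfl (by norm_num) (le_trans zero_le_one h1k)
    _ = 6 * ((m:ℝ) * Real.exp (-(γ * (m:ℝ)))) := by field_simp; ring
  -- exp values at ±(m+1/2)
  have hecp : ∀ m : ℕ, Complex.exp (2 * Real.pi * Complex.I * ((((m:ℝ) + 1/2 : ℝ)):ℂ)) = -1 := by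
    intro m
    rw [show (2 * (Real.pi:ℂ) * Complex.I * ((((m:ℝ) + 1/2 : ℝ)):ℂ))
        = ((m:ℤ):ℂ) * (2 * Real.pi * Complex.I) + Real.pi * Complex.I by push_cast; ring]
    rw [Complex.exp_add, Complex.exp_int_mul_two_pi_mul_I, Complex.exp_pi_mul_I, one_mul]
  have hecm : ∀ m : ℕ, Complex.exp (2 * Real.pi * Complex.I * (((-((m:ℝ) + 1/2) : ℝ)):ℂ)) = -1 := by
    intro m
    rw [show (2 * (Real.pi:ℂ) * Complex.I * (((-((m:ℝ) + 1/2) : ℝ)):ℂ))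
        = (((-(m:ℤ) - 1 : ℤ)):ℂ) * (2 * Real.pi * Complex.I) + Real.pi * Complex.I by
      push_cast; ring]
    rw [Complex.exp_add, Complex.exp_int_mul_two_pi_mul_I, Complex.exp_pi_mul_I, one_mul]
  -- the four limits
  have hT1 : Tendsto (fun m : ℕ =>
      ∫ x in -((m:ℝ)+1/2)..((m:ℝ)+1/2), h ((x:ℂ) - Complex.I * (m:ℂ))) atTop (nhds 0) := by
    refine squeeze_zero_norm' ?_ (by simpa using (aux_decay hδ).const_mul (6:ℝ))
    filter_upwards [eventually_ge_atTop 1] with m hm using bot m hm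
  have hT3 : Tendsto (fun m : ℕ =>
      ∫ x in -((m:ℝ)+1/2)..((m:ℝ)+1/2), h ((x:ℂ) + Complex.I * (m:ℂ))) atTop (nhds 0) := by
    refine squeeze_zero_norm' ?_ (by simpa using (aux_decay hγ₀).const_mul (6:ℝ))
    filter_upwards [eventually_ge_atTop 1] with m hm using top m hm
  have hT2 : Tendsto (fun m : ℕ => Complex.I * ∫ y in -(m:ℝ)..(m:ℝ),
      h ((((m:ℝ) + 1/2 : ℝ):ℂ) + Complex.I * (y:ℂ))) atTop (nhds 0) := by
    refine squeeze_zero_norm' ?_ (tendsto_const_div_atTop_nhds_zero_nat (1/δ + 1/γ))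
    filter_upwards [eventually_ge_atTop 1] with m hm
    rw [norm_mul, Complex.norm_I, one_mul]
    refine side m hm ((m:ℝ) + 1/2) ?_ (hecp m)
    rw [_root_.abs_of_pos (by positivity)]; linarith
  have hT4 : Tendsto (fun m : ℕ => Complex.I * ∫ y in -(m:ℝ)..(m:ℝ),
      h (-((((m:ℝ) + 1/2 : ℝ)):ℂ) + Complex.I * (y:ℂ))) atTop (nhds 0) := by
    refine squeeze_zero_norm' ?_ (tendsto_const_div_atTop_nhds_zero_nat (1/δ + 1/γ))
    filter_upwards [eventually_ge_atTop 1] with m hm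
    rw [norm_mul, Complex.norm_I, one_mul]
    have hre : -((((m:ℝ) + 1/2 : ℝ)):ℂ) = (((-((m:ℝ) + 1/2)) : ℝ):ℂ) := by push_cast; ring
    rw [show (fun y : ℝ => h (-((((m:ℝ) + 1/2 : ℝ)):ℂ) + Complex.I * (y:ℂ)))
        = fun y : ℝ => h ((((-((m:ℝ) + 1/2)) : ℝ):ℂ) + Complex.I * (y:ℂ)) by
      funext y; rw [hre]]
    refine side m hm (-((m:ℝ) + 1/2)) ?_ (hecm m)
    rw [abs_neg, _root_.abs_of_pos (by positivity)]; linarith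
  have := ((hT1.add hT2).sub hT3).sub hT4
  simpa using this
end
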